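/- arXiv:2003.12089 — 7 statements merged into one kernel-verified Lean document; each statement's English description precedes it below -/
import Mathlib

section
/- Let B, H, M be a solution of the brood–bee–mite delay system with initial data satisfying B₀(t) > 0 for all t ∈ [−τ, 0], H(0) > 0 and M(0) > 0. Then B(t) > 0, H(t) > 0 and M(t) > 0 for all t > 0. -/
open Real Filter Set

/-- The survival factor `E(t) = exp(-∫_{t-τ}^{t} (d_b + α_b M(s)/(a + B(s))) ds)`. -/
noncomputable def Esurv (db αb a τ : ℝ) (B M : ℝ → ℝ) (t : ℝ) : ℝ :=
  Real.exp (-∫ s in (t - τ)..t, (db + αb * M s / (a + B s)))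

/-- A solution of the brood–bee–mite delay system with parameters
`r, K, d_b, d_h, d_m, α_b, α_h, c, a, τ` and initial brood history `B₀`. -/
structure BHMSolution (r K db dh dm αb αh c a τ : ℝ) (B₀ B H M : ℝ → ℝ) : Prop where
  cont_B₀ : ContinuousOn B₀ (Set.Icc (-τ) 0)
  cont_B : ContinuousOn B (Set.Ici (-τ))
  cont_H : ContinuousOn H (Set.Ici (-τ))
  cont_M : ContinuousOn M (Set.Ici (-τ))
  init_B : ∀ t ∈ Set.Icc (-τ) (0 : ℝ), B t = B₀ t
  init_H : ∀ t ∈ Set.Icc (-τ) (0 : ℝ), H t = H 0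
  init_M : ∀ t ∈ Set.Icc (-τ) (0 : ℝ), M t = M 0
  B_zero : B 0 = ∫ t in (-τ)..(0 : ℝ), B₀ t
  deriv_B₁ : ∀ t ∈ Set.Ioc (0 : ℝ) τ, HasDerivAt B
      (r * H t ^ 2 / (K + H t ^ 2) - αb * B t * M t / (a + B t) - db * B t
        - Esurv db αb a τ B M t * B₀ (t - τ)) t
  deriv_H₁ : ∀ t ∈ Set.Ioc (0 : ℝ) τ, HasDerivAt H
      (Esurv db αb a τ B M t * B₀ (t - τ) - αh * H t * M t / (a + H t) - dh * H t) t
  deriv_B₂ : ∀ t, τ < t → HasDerivAt B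
      (r * H t ^ 2 / (K + H t ^ 2) - αb * B t * M t / (a + B t) - db * B t
        - Esurv db αb a τ B M t * (r * H (t - τ) ^ 2 / (K + H (t - τ) ^ 2))) t
  deriv_H₂ : ∀ t, τ < t → HasDerivAt H
      (Esurv db αb a τ B M t * (r * H (t - τ) ^ 2 / (K + H (t - τ) ^ 2))
        - αh * H t * M t / (a + H t) - dh * H t) t
  deriv_M : ∀ t, (0 : ℝ) < t → HasDerivAt M
      (c * αb * B t * M t / (a + B t) - dm * M t) t

lemma pos_of_deriv_ge' (T C : ℝ) (hT : 0 < T) (f : ℝ → ℝ)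
    (hf : ContinuousOn f (Set.Icc 0 T)) (h0 : 0 < f 0)
    (hd : ∀ t ∈ Set.Ioo (0:ℝ) T, ∃ f', HasDerivAt f f' t ∧ 0 ≤ f' + C * f t) :
    0 < f T := by
  have hgd : ∀ t ∈ Set.Ioo (0:ℝ) T,
      ∃ g', HasDerivAt (fun t => f t * Real.exp (C * t)) g' t ∧ 0 ≤ g' := by
    intro t ht
    obtain ⟨f', hf', hge⟩ := hd t ht
    have he : HasDerivAt (fun x => Real.exp (C * x)) (Real.exp (C * t) * (C * 1)) t :=
      (((hasDerivAt_id t).const_mul C).exp)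
    refine ⟨_, hf'.mul he, ?_⟩
    have heq : f' * Real.exp (C * t) + f t * (Real.exp (C * t) * (C * 1))
        = (f' + C * f t) * Real.exp (C * t) := by ring
    rw [heq]
    exact mul_nonneg hge (Real.exp_pos _).le
  have hmono : MonotoneOn (fun t => f t * Real.exp (C * t)) (Set.Icc 0 T) := by
    apply monotoneOn_of_deriv_nonneg (convex_Icc 0 T)
    · exact hf.mul (Real.continuous_exp.comp (continuous_const.mul continuous_id)).continuousOn
    · intro t ht
      rw [interior_Icc] at ht
      obtain ⟨g', hg', _⟩ := hgd t ht
      exact hg'.differentiableAt.differentiableWithinAt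
    · intro t ht
      rw [interior_Icc] at ht
      obtain ⟨g', hg', hge⟩ := hgd t ht
      rw [hg'.deriv]; exact hge
  have hle := hmono (Set.left_mem_Icc.2 hT.le) (Set.right_mem_Icc.2 hT.le) hT.le
  simp only [mul_zero, Real.exp_zero, mul_one] at hle
  nlinarith [Real.exp_pos (C * T), hle]


set_option maxHeartbeats 2000000 in
/-- positivity of solutions of the brood–bee–mite delay system. -/
theorem bhm_positivity (r K db dh dm αb αh c a τ : ℝ)
    (hr : 0 < r) (hK : 0 < K) (hdb : 0 < db) (hdh : 0 < dh) (hdm : 0 < dm)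
    (hαb : 0 < αb) (hαh : 0 < αh) (hc : 0 < c) (ha : 0 < a) (hτ : 0 < τ)
    (B₀ B H M : ℝ → ℝ)
    (hsol : BHMSolution r K db dh dm αb αh c a τ B₀ B H M)
    (hB₀pos : ∀ t ∈ Set.Icc (-τ) (0 : ℝ), 0 < B₀ t)
    (hH0 : 0 < H 0) (hM0 : 0 < M 0) :
    ∀ t > (0 : ℝ), 0 < B t ∧ 0 < H t ∧ 0 < M t := by
  intro t₁ ht₁
  by_contra hcon
  have hτ' : -τ ≤ (0:ℝ) := by linarith
  have hB0pos : 0 < B 0 := by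
    rw [hsol.B_zero]
    apply intervalIntegral.intervalIntegral_pos_of_pos_on
    · refine ContinuousOn.intervalIntegrable ?_
      rw [Set.uIcc_of_le hτ']; exact hsol.cont_B₀
    · exact fun x hx => hB₀pos x ⟨hx.1.le, hx.2.le⟩
    · linarith
  have hA1 : B t₁ ≤ 0 ∨ H t₁ ≤ 0 ∨ M t₁ ≤ 0 := by
    by_contra h; push_neg at h; exact hcon ⟨h.1, h.2.1, h.2.2⟩
  set A : Set ℝ := {t | t ∈ Set.Icc 0 t₁ ∧ (B t ≤ 0 ∨ H t ≤ 0 ∨ M t ≤ 0)} with hA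
  have hAne : A.Nonempty := ⟨t₁, ⟨⟨ht₁.le, le_rfl⟩, hA1⟩⟩
  have hbdd : BddBelow A := ⟨0, fun x hx => hx.1.1⟩
  have hsub : Set.Icc (0:ℝ) t₁ ⊆ Set.Ici (-τ) := fun x hx => le_trans (by linarith) hx.1
  have hAclosed : IsClosed A := by
    have h1 := (hsol.cont_B.mono hsub).preimage_isClosed_of_isClosed isClosed_Icc
      (isClosed_Iic : IsClosed (Set.Iic (0:ℝ)))
    have h2 := (hsol.cont_H.mono hsub).preimage_isClosed_of_isClosed isClosed_Icc
      (isClosed_Iic : IsClosed (Set.Iic (0:ℝ)))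
    have h3 := (hsol.cont_M.mono hsub).preimage_isClosed_of_isClosed isClosed_Icc
      (isClosed_Iic : IsClosed (Set.Iic (0:ℝ)))
    have hAeq : A = (Set.Icc 0 t₁ ∩ B ⁻¹' Set.Iic 0) ∪
        ((Set.Icc 0 t₁ ∩ H ⁻¹' Set.Iic 0) ∪ (Set.Icc 0 t₁ ∩ M ⁻¹' Set.Iic 0)) := by
      ext x
      simp only [hA, Set.mem_setOf_eq, Set.mem_union, Set.mem_inter_iff, Set.mem_preimage,
        Set.mem_Iic]
      tauto
    rw [hAeq]; exact h1.union (h2.union h3)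
  set T := sInf A with hTdef
  have hTA : T ∈ A := hAclosed.csInf_mem hAne hbdd
  have hT0 : 0 ≤ T := hTA.1.1
  have hTt₁ : T ≤ t₁ := hTA.1.2
  have hTpos : 0 < T := by
    rcases hT0.lt_or_eq with h | h
    · exact h
    · exfalso; rcases hTA.2 with h' | h' | h' <;> rw [← h] at h' <;> linarith
  have hpos : ∀ t ∈ Set.Ico 0 T, 0 < B t ∧ 0 < H t ∧ 0 < M t := by
    intro t ht
    have hnA : t ∉ A := notMem_of_lt_csInf ht.2 hbdd
    have htmem : t ∈ Set.Icc 0 t₁ := ⟨ht.1, le_trans ht.2.le hTt₁⟩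
    have h : ¬(B t ≤ 0 ∨ H t ≤ 0 ∨ M t ≤ 0) := fun hd => hnA ⟨htmem, hd⟩
    push_neg at h
    exact h
  have hTval : B T ≤ 0 ∨ H T ≤ 0 ∨ M T ≤ 0 := hTA.2
  clear hTA hAclosed hAne hbdd hA1 hTdef
  clear_value T
  clear hA
  clear A
  have hTmem : -τ ≤ T := by linarith
  have hIcoT : Set.Ico (0:ℝ) T ⊆ Set.Ici (-τ) := fun x hx => le_trans (by linarith) hx.1
  have hendpt : ∀ (f : ℝ → ℝ), ContinuousOn f (Set.Ici (-τ)) →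
      (∀ t ∈ Set.Ico 0 T, 0 < f t) → 0 ≤ f T := by
    intro f hf hfpos
    have hne : Filter.NeBot (nhdsWithin T (Set.Ico 0 T)) := right_nhdsWithin_Ico_neBot hTpos
    have htd : Filter.Tendsto f (nhdsWithin T (Set.Ico 0 T)) (nhds (f T)) :=
      (hf T hTmem).mono hIcoT
    exact ge_of_tendsto htd
      (Filter.eventually_of_mem self_mem_nhdsWithin (fun x hx => (hfpos x hx).le))
  have hBT : 0 ≤ B T := hendpt B hsol.cont_B (fun t ht => (hpos t ht).1)
  have hHT : 0 ≤ H T := hendpt H hsol.cont_H (fun t ht => (hpos t ht).2.1)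
  have hMT : 0 ≤ M T := hendpt M hsol.cont_M (fun t ht => (hpos t ht).2.2)
  have hBnn : ∀ t ∈ Set.Icc 0 T, 0 ≤ B t := by
    intro t ht
    rcases ht.2.lt_or_eq with h | h
    · exact (hpos t ⟨ht.1, h⟩).1.le
    · rw [h]; exact hBT
  have hHnn : ∀ t ∈ Set.Icc 0 T, 0 ≤ H t := by
    intro t ht
    rcases ht.2.lt_or_eq with h | h
    · exact (hpos t ⟨ht.1, h⟩).2.1.le
    · rw [h]; exact hHT
  have hMnn : ∀ t ∈ Set.Icc 0 T, 0 ≤ M t := by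
    intro t ht
    rcases ht.2.lt_or_eq with h | h
    · exact (hpos t ⟨ht.1, h⟩).2.2.le
    · rw [h]; exact hMT
  have hBnnτ : ∀ t ∈ Set.Icc (-τ) T, 0 ≤ B t := by
    intro t ht
    rcases le_or_gt t 0 with h | h
    · rw [hsol.init_B t ⟨ht.1, h⟩]; exact (hB₀pos t ⟨ht.1, h⟩).le
    · exact hBnn t ⟨h.le, ht.2⟩
  have hMnnτ : ∀ t ∈ Set.Icc (-τ) T, 0 ≤ M t := by
    intro t ht
    rcases le_or_gt t 0 with h | h
    · rw [hsol.init_M t ⟨ht.1, h⟩]; exact hM0.le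
    · exact hMnn t ⟨h.le, ht.2⟩
  have hsubT : Set.Icc (0:ℝ) T ⊆ Set.Ici (-τ) := fun x hx => le_trans (by linarith) hx.1
  -- M T > 0
  have hMT' : 0 < M T := by
    apply pos_of_deriv_ge' T dm hTpos M (hsol.cont_M.mono hsubT) hM0
    intro t ht
    refine ⟨_, hsol.deriv_M t ht.1, ?_⟩
    have hBt := (hpos t ⟨ht.1.le, ht.2⟩).1
    have hMt := (hpos t ⟨ht.1.le, ht.2⟩).2.2
    have heq : c * αb * B t * M t / (a + B t) - dm * M t + dm * M t
        = c * αb * B t * M t / (a + B t) := by ring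
    rw [heq]
    exact div_nonneg (mul_pos (mul_pos (mul_pos hc hαb) hBt) hMt).le (by linarith)
  -- H T > 0
  obtain ⟨Cm, hCm⟩ : ∃ Cm, ∀ t ∈ Set.Icc 0 T, M t ≤ Cm := by
    obtain ⟨Cm, hCm⟩ := isCompact_Icc.exists_bound_of_continuousOn (hsol.cont_M.mono hsubT)
    exact ⟨Cm, fun t ht => le_trans (le_abs_self _) (by simpa using hCm t ht)⟩
  have hHT' : 0 < H T := by
    apply pos_of_deriv_ge' T (dh + αh * Cm / a) hTpos H (hsol.cont_H.mono hsubT) hH0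
    intro t ht
    have hHt := (hpos t ⟨ht.1.le, ht.2⟩).2.1
    have hMt := (hpos t ⟨ht.1.le, ht.2⟩).2.2
    have hMC := hCm t ⟨ht.1.le, ht.2.le⟩
    have hfrac : αh * H t * M t / (a + H t) ≤ αh * H t * Cm / a := by
      rw [div_le_div_iff₀ (by linarith) ha]
      nlinarith [mul_nonneg (mul_nonneg hαh.le hHt.le) (mul_nonneg (sub_nonneg.2 hMC) ha.le),
        mul_nonneg (mul_nonneg hαh.le hHt.le) (mul_nonneg (le_trans hMt.le hMC) hHt.le)]
    rcases le_or_gt t τ with hcase | hcase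
    · refine ⟨_, hsol.deriv_H₁ t ⟨ht.1, hcase⟩, ?_⟩
      have hB₀' := hB₀pos (t - τ) ⟨by linarith [ht.1], by linarith⟩
      have key : 0 ≤ Esurv db αb a τ B M t * B₀ (t - τ) :=
        (mul_pos (Real.exp_pos _) hB₀').le
      have hexp : (dh + αh * Cm / a) * H t = dh * H t + αh * H t * Cm / a := by ring
      rw [hexp]; linarith [hfrac, key]
    · refine ⟨_, hsol.deriv_H₂ t hcase, ?_⟩
      have key : 0 ≤ Esurv db αb a τ B M t * (r * H (t - τ) ^ 2 / (K + H (t - τ) ^ 2)) := by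
        apply mul_nonneg (Real.exp_pos _).le
        apply div_nonneg (mul_nonneg hr.le (sq_nonneg _))
        nlinarith [sq_nonneg (H (t - τ))]
      have hexp : (dh + αh * Cm / a) * H t = dh * H t + αh * H t * Cm / a := by ring
      rw [hexp]; linarith [hfrac, key]
  have hBT0 : B T = 0 := by
    rcases hTval with h | h | h
    · linarith
    · linarith
    · linarith

  -- the integrating-factor / delay-integral argument for B
  set μ' : ℝ → ℝ := fun s => db + αb * M s / (a + B s) with hμ'
  set P : ℝ → ℝ := fun x => ∫ s in (0:ℝ)..x, μ' s with hP
  have hsubIci : Set.Icc (-τ) T ⊆ Set.Ici (-τ) := Set.Icc_subset_Ici_self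
  have haB : ∀ t ∈ Set.Icc (-τ) T, 0 < a + B t := fun t ht => by linarith [hBnnτ t ht]
  have hμcont : ContinuousOn μ' (Set.Icc (-τ) T) := by
    rw [hμ']
    exact continuousOn_const.add (ContinuousOn.div
      (continuousOn_const.mul (hsol.cont_M.mono hsubIci))
      (continuousOn_const.add (hsol.cont_B.mono hsubIci))
      (fun t ht => (haB t ht).ne'))
  have h0mem : (0:ℝ) ∈ Set.Icc (-τ) T := ⟨hτ', hT0⟩
  have hμint : ∀ u ∈ Set.Icc (-τ) T, ∀ v ∈ Set.Icc (-τ) T,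
      IntervalIntegrable μ' MeasureTheory.volume u v :=
    fun u hu v hv => (hμcont.mono (Set.uIcc_subset_Icc hu hv)).intervalIntegrable
  have hμnn : ∀ t ∈ Set.Icc (-τ) T, 0 ≤ μ' t := by
    intro t ht
    have h1 : 0 ≤ αb * M t / (a + B t) :=
      div_nonneg (mul_nonneg hαb.le (hMnnτ t ht)) (haB t ht).le
    rw [hμ']; dsimp only; linarith
  have hPcont : ContinuousOn P (Set.Icc (-τ) T) := by
    rw [hP]
    have := intervalIntegral.continuousOn_primitive_interval'
      (hμint (-τ) (Set.left_mem_Icc.2 hTmem) T (Set.right_mem_Icc.2 hTmem))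
      (by rw [Set.uIcc_of_le hTmem]; exact h0mem)
    rwa [Set.uIcc_of_le hTmem] at this
  have hPderiv : ∀ t ∈ Set.Ioo (0:ℝ) T, HasDerivAt P (μ' t) t := by
    intro t ht
    have hmem : t ∈ Set.Ioo (-τ) T := ⟨by linarith [ht.1], ht.2⟩
    have hμco : ContinuousOn μ' (Set.Ioo (-τ) T) := hμcont.mono Set.Ioo_subset_Icc_self
    have htIcc : t ∈ Set.Icc (-τ) T := ⟨hmem.1.le, hmem.2.le⟩
    rw [hP]
    exact intervalIntegral.integral_hasDerivAt_right (hμint 0 h0mem t htIcc)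
      ((hμco.stronglyMeasurableAtFilter isOpen_Ioo) t hmem)
      (hμco.continuousAt (isOpen_Ioo.mem_nhds hmem))
  have hEeq : ∀ t ∈ Set.Ioo (0:ℝ) T,
      Real.exp (P t) * Esurv db αb a τ B M t = Real.exp (P (t - τ)) := by
    intro t ht
    have htIcc : t ∈ Set.Icc (-τ) T := ⟨by linarith [ht.1], ht.2.le⟩
    have htτIcc : t - τ ∈ Set.Icc (-τ) T := ⟨by linarith [ht.1], by linarith [ht.2]⟩
    have h1 : P t - P (t - τ) = ∫ s in (t - τ)..t, μ' s := by
      rw [hP]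
      exact intervalIntegral.integral_interval_sub_left (hμint 0 h0mem t htIcc)
        (hμint 0 h0mem (t - τ) htτIcc)
    have h2 : Esurv db αb a τ B M t = Real.exp (-∫ s in (t - τ)..t, μ' s) := by
      rw [Esurv, hμ']
    rw [h2, ← Real.exp_add, ← h1]
    ring_nf
  set G₀ : ℝ → ℝ := fun s => Real.exp (P s) * B₀ s with hG₀
  set G₁ : ℝ → ℝ := fun s => Real.exp (P s) * (r * H s ^ 2 / (K + H s ^ 2)) with hG₁
  set hh : ℝ → ℝ := fun s => if s ≤ 0 then G₀ s else G₁ s with hhh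
  set D : ℝ → ℝ := fun s => G₁ s - hh (s - τ) with hD
  set W : ℝ → ℝ := fun t => B t * Real.exp (P t) with hW
  have hexpP : ContinuousOn (fun s => Real.exp (P s)) (Set.Icc (-τ) T) :=
    Real.continuous_exp.comp_continuousOn hPcont
  have hsubIcc0 : Set.Icc (-τ) (0:ℝ) ⊆ Set.Icc (-τ) T := Set.Icc_subset_Icc_right hT0
  have hsubIccT : Set.Icc (0:ℝ) T ⊆ Set.Icc (-τ) T := Set.Icc_subset_Icc_left hτ'
  have hG₀cont : ContinuousOn G₀ (Set.Icc (-τ) 0) := by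
    rw [hG₀]; exact (hexpP.mono hsubIcc0).mul hsol.cont_B₀
  have hKH : ∀ s, (0:ℝ) < K + H s ^ 2 := fun s => by nlinarith [sq_nonneg (H s)]
  have hG₁cont : ContinuousOn G₁ (Set.Icc 0 T) := by
    rw [hG₁]
    exact (hexpP.mono hsubIccT).mul (ContinuousOn.div
      (continuousOn_const.mul ((hsol.cont_H.mono hsubT).pow 2))
      (continuousOn_const.add ((hsol.cont_H.mono hsubT).pow 2))
      (fun s _ => (hKH s).ne'))
  -- derivative of W
  have hWd : ∀ t ∈ Set.Ioo (0:ℝ) T, HasDerivAt W (D t) t := by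
    intro t ht
    have hexp' : HasDerivAt (fun x => Real.exp (P x)) (Real.exp (P t) * μ' t) t :=
      (hPderiv t ht).exp
    have hEq := hEeq t ht
    rcases le_or_gt t τ with hcase | hcase
    · have hB' := hsol.deriv_B₁ t ⟨ht.1, hcase⟩
      have hprod := hB'.mul hexp'
      have heq2 : D t = (r * H t ^ 2 / (K + H t ^ 2) - αb * B t * M t / (a + B t) - db * B t
          - Esurv db αb a τ B M t * B₀ (t - τ)) * Real.exp (P t)
          + B t * (Real.exp (P t) * μ' t) := by
        rw [hD]; dsimp only
        rw [hhh]; dsimp only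
        rw [if_pos (by linarith : t - τ ≤ (0:ℝ)), hG₀, hG₁, hμ']; dsimp only
        linear_combination (B₀ (t - τ)) * hEq
      rw [hW, heq2]
      exact hprod
    · have hB' := hsol.deriv_B₂ t hcase
      have hprod := hB'.mul hexp'
      have heq2 : D t = (r * H t ^ 2 / (K + H t ^ 2) - αb * B t * M t / (a + B t) - db * B t
          - Esurv db αb a τ B M t * (r * H (t - τ) ^ 2 / (K + H (t - τ) ^ 2)))
          * Real.exp (P t) + B t * (Real.exp (P t) * μ' t) := by
        rw [hD]; dsimp only
        rw [hhh]; dsimp only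
        rw [if_neg (by push_neg; linarith : ¬ t - τ ≤ (0:ℝ)), hG₁, hμ']; dsimp only
        linear_combination (r * H (t - τ) ^ 2 / (K + H (t - τ) ^ 2)) * hEq
      rw [hW, heq2]
      exact hprod
  have hWcont : ContinuousOn W (Set.Icc 0 T) := by
    rw [hW]; exact (hsol.cont_B.mono hsubT).mul (hexpP.mono hsubIccT)
  have hG₁int : IntervalIntegrable G₁ MeasureTheory.volume 0 T := by
    refine ContinuousOn.intervalIntegrable ?_
    rw [Set.uIcc_of_le hT0]; exact hG₁cont
  have hshiftint : IntervalIntegrable (fun s => hh (s - τ)) MeasureTheory.volume 0 T := by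
    have hcontshift : ∀ u v : ℝ, 0 ≤ u → v ≤ τ → u ≤ v →
        ContinuousOn (fun s => hh (s - τ)) (Set.Icc u v) := by
      intro u v hu hv huv
      have hc : ContinuousOn (fun s => G₀ (s - τ)) (Set.Icc u v) := by
        apply hG₀cont.comp (Continuous.continuousOn (continuous_sub_right τ))
        intro x hx
        exact Set.mem_Icc.mpr ⟨by dsimp only; linarith [hx.1, hu], by dsimp only; linarith [hx.2, hv]⟩
      apply hc.congr
      intro x hx
      rw [hhh]; dsimp only
      rw [if_pos (by linarith [hx.2] : x - τ ≤ (0:ℝ))]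
    rcases le_or_gt T τ with hcase | hcase
    · refine ContinuousOn.intervalIntegrable ?_
      rw [Set.uIcc_of_le hT0]
      exact hcontshift 0 T le_rfl hcase hT0
    · have h1 : IntervalIntegrable (fun s => hh (s - τ)) MeasureTheory.volume 0 τ := by
        refine ContinuousOn.intervalIntegrable ?_
        rw [Set.uIcc_of_le hτ.le]
        exact hcontshift 0 τ le_rfl le_rfl hτ.le
      have h2 : IntervalIntegrable (fun s => hh (s - τ)) MeasureTheory.volume τ T := by
        rw [intervalIntegrable_iff_integrableOn_Ioc_of_le hcase.le]
        have hcG : ContinuousOn (fun s => G₁ (s - τ)) (Set.Icc τ T) := by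
          apply hG₁cont.comp (Continuous.continuousOn (continuous_sub_right τ))
          intro x hx
          exact Set.mem_Icc.mpr ⟨by dsimp only; linarith [hx.1], by dsimp only; linarith [hx.2]⟩
        have hintG : MeasureTheory.IntegrableOn (fun s => G₁ (s - τ))
            (Set.Ioc τ T) MeasureTheory.volume := by
          have hii : IntervalIntegrable (fun s => G₁ (s - τ)) MeasureTheory.volume τ T := by
            refine ContinuousOn.intervalIntegrable ?_
            rw [Set.uIcc_of_le hcase.le]; exact hcG
          rwa [intervalIntegrable_iff_integrableOn_Ioc_of_le hcase.le] at hii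
        apply hintG.congr_fun _ measurableSet_Ioc
        intro x hx
        rw [hhh]; dsimp only
        rw [if_neg (by push_neg; linarith [hx.1] : ¬ x - τ ≤ (0:ℝ))]
      exact h1.trans h2
  have hDint : IntervalIntegrable D MeasureTheory.volume 0 T := by
    rw [hD]; exact hG₁int.sub hshiftint
  have hFTC : ∫ s in (0:ℝ)..T, D s = W T - W 0 :=
    intervalIntegral.integral_eq_sub_of_hasDeriv_right_of_le hT0 hWcont
      (fun x hx => (hWd x hx).hasDerivWithinAt) hDint
  have hsplit : ∫ s in (0:ℝ)..T, D s
      = (∫ s in (0:ℝ)..T, G₁ s) - ∫ s in (-τ)..(T - τ), hh s := by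
    rw [hD]; dsimp only
    rw [intervalIntegral.integral_sub hG₁int hshiftint,
      intervalIntegral.integral_comp_sub_right hh τ, zero_sub]
  have hW0 : W 0 = ∫ s in (-τ)..(0:ℝ), B₀ s := by
    rw [hW]; dsimp only
    rw [hP]; dsimp only
    rw [intervalIntegral.integral_same, Real.exp_zero, mul_one, hsol.B_zero]
  have hWT : W T = 0 := by
    rw [hW]; dsimp only
    rw [hBT0, zero_mul]
  have hPle : ∀ s ∈ Set.Icc (-τ) (0:ℝ), P s ≤ 0 := by
    intro s hs
    have h1 : P s = -∫ u in s..(0:ℝ), μ' u := by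
      rw [hP]; dsimp only
      rw [← intervalIntegral.integral_symm]
    rw [h1, neg_nonpos]
    exact intervalIntegral.integral_nonneg hs.2
      (fun u hu => hμnn u ⟨le_trans hs.1 hu.1, le_trans hu.2 hT0⟩)
  have hG₀nn : ∀ s ∈ Set.Icc (-τ) (0:ℝ), 0 ≤ G₀ s := by
    intro s hs
    rw [hG₀]; dsimp only
    exact mul_nonneg (Real.exp_pos _).le (hB₀pos s hs).le
  have hG₀le : ∀ s ∈ Set.Icc (-τ) (0:ℝ), G₀ s ≤ B₀ s := by
    intro s hs
    rw [hG₀]; dsimp only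
    have h1 : Real.exp (P s) ≤ 1 := Real.exp_le_one_iff.mpr (hPle s hs)
    nlinarith [(hB₀pos s hs).le]
  have hG₀intuv : ∀ u ∈ Set.Icc (-τ) (0:ℝ), ∀ v ∈ Set.Icc (-τ) (0:ℝ),
      IntervalIntegrable G₀ MeasureTheory.volume u v :=
    fun u hu v hv => (hG₀cont.mono (Set.uIcc_subset_Icc hu hv)).intervalIntegrable
  have hB₀int : IntervalIntegrable B₀ MeasureTheory.volume (-τ) 0 := by
    refine ContinuousOn.intervalIntegrable ?_
    rw [Set.uIcc_of_le hτ']; exact hsol.cont_B₀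
  have hmonoG₀ : (∫ s in (-τ)..(0:ℝ), G₀ s) ≤ ∫ s in (-τ)..(0:ℝ), B₀ s :=
    intervalIntegral.integral_mono_on hτ'
      (hG₀intuv (-τ) (Set.left_mem_Icc.2 hτ') 0 (Set.right_mem_Icc.2 hτ')) hB₀int hG₀le
  have hG₁pos : ∀ s ∈ Set.Ioo (0:ℝ) T, 0 < G₁ s := by
    intro s hs
    rw [hG₁]; dsimp only
    exact mul_pos (Real.exp_pos _)
      (div_pos (mul_pos hr (pow_pos (hpos s ⟨hs.1.le, hs.2⟩).2.1 2)) (hKH s))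
  rcases le_or_gt T τ with hcase | hcase
  · -- T ≤ τ
    have hcong : ∫ s in (-τ)..(T - τ), hh s = ∫ s in (-τ)..(T - τ), G₀ s := by
      apply intervalIntegral.integral_congr
      intro s hs
      rw [Set.uIcc_of_le (by linarith : -τ ≤ T - τ)] at hs
      rw [hhh]; dsimp only
      rw [if_pos (by linarith [hs.2] : s ≤ (0:ℝ))]
    have hTτmem : T - τ ∈ Set.Icc (-τ) (0:ℝ) := ⟨by linarith, by linarith⟩
    have hsub0 : (∫ s in (-τ)..(0:ℝ), G₀ s) - ∫ s in (-τ)..(T - τ), G₀ s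
        = ∫ s in (T - τ)..(0:ℝ), G₀ s :=
      intervalIntegral.integral_interval_sub_left
        (hG₀intuv (-τ) (Set.left_mem_Icc.2 hτ') 0 (Set.right_mem_Icc.2 hτ'))
        (hG₀intuv (-τ) (Set.left_mem_Icc.2 hτ') (T - τ) hTτmem)
    have hnn1 : 0 ≤ ∫ s in (T - τ)..(0:ℝ), G₀ s :=
      intervalIntegral.integral_nonneg (by linarith)
        (fun u hu => hG₀nn u ⟨by linarith [hu.1], hu.2⟩)
    have hposint : 0 < ∫ s in (0:ℝ)..T, G₁ s :=
      intervalIntegral.intervalIntegral_pos_of_pos_on hG₁int hG₁pos hTpos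
    rw [hsplit, hcong] at hFTC
    rw [hW0] at hFTC
    linarith [hsub0, hnn1, hposint, hWT, hFTC, hmonoG₀]
  · -- τ < T
    have hint1 : IntervalIntegrable hh MeasureTheory.volume (-τ) 0 := by
      refine ContinuousOn.intervalIntegrable ?_
      rw [Set.uIcc_of_le hτ']
      apply hG₀cont.congr
      intro x hx
      rw [hhh]; dsimp only
      rw [if_pos hx.2]
    have hTτ0 : (0:ℝ) ≤ T - τ := by linarith
    have hG₁int' : IntervalIntegrable G₁ MeasureTheory.volume 0 (T - τ) := by
      refine ContinuousOn.intervalIntegrable ?_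
      rw [Set.uIcc_of_le hTτ0]
      exact hG₁cont.mono (Set.Icc_subset_Icc_right (by linarith))
    have hint2 : IntervalIntegrable hh MeasureTheory.volume 0 (T - τ) := by
      rw [intervalIntegrable_iff_integrableOn_Ioc_of_le hTτ0]
      have hintG : MeasureTheory.IntegrableOn G₁ (Set.Ioc 0 (T - τ)) MeasureTheory.volume := by
        have := hG₁int'
        rwa [intervalIntegrable_iff_integrableOn_Ioc_of_le hTτ0] at this
      apply hintG.congr_fun _ measurableSet_Ioc
      intro x hx
      rw [hhh]; dsimp only
      rw [if_neg (not_le.mpr hx.1)]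
    have hadj : ∫ s in (-τ)..(T - τ), hh s
        = (∫ s in (-τ)..(0:ℝ), hh s) + ∫ s in (0:ℝ)..(T - τ), hh s :=
      (intervalIntegral.integral_add_adjacent_intervals hint1 hint2).symm
    have hcong1 : ∫ s in (-τ)..(0:ℝ), hh s = ∫ s in (-τ)..(0:ℝ), G₀ s := by
      apply intervalIntegral.integral_congr
      intro s hs
      rw [Set.uIcc_of_le hτ'] at hs
      rw [hhh]; dsimp only
      rw [if_pos hs.2]
    have hcong2 : ∫ s in (0:ℝ)..(T - τ), hh s = ∫ s in (0:ℝ)..(T - τ), G₁ s := by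
      apply intervalIntegral.integral_congr_ae
      apply Filter.Eventually.of_forall
      intro x hx
      rw [Set.uIoc_of_le hTτ0] at hx
      rw [hhh]; dsimp only
      rw [if_neg (not_le.mpr hx.1)]
    have hsub1 : (∫ s in (0:ℝ)..T, G₁ s) - ∫ s in (0:ℝ)..(T - τ), G₁ s
        = ∫ s in (T - τ)..T, G₁ s :=
      intervalIntegral.integral_interval_sub_left hG₁int hG₁int'
    have hG₁int'' : IntervalIntegrable G₁ MeasureTheory.volume (T - τ) T := by
      refine ContinuousOn.intervalIntegrable ?_
      rw [Set.uIcc_of_le (by linarith : T - τ ≤ T)]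
      exact hG₁cont.mono (Set.Icc_subset_Icc_left hTτ0)
    have hpos2 : 0 < ∫ s in (T - τ)..T, G₁ s :=
      intervalIntegral.intervalIntegral_pos_of_pos_on hG₁int''
        (fun x hx => hG₁pos x ⟨by linarith [hx.1], hx.2⟩) (by linarith)
    rw [hsplit, hadj, hcong1, hcong2] at hFTC
    rw [hW0] at hFTC
    linarith [hsub1, hpos2, hWT, hFTC, hmonoG₀]
end

section
/- Let r, K, d_b, d_h, τ be positive reals with d_h < r·e^{−d_b τ}/(2√K). Define H₁ = (r e^{−d_b τ}/(2 d_h))·(1 − √(1 − (2 d_h e^{d_b τ}/r)²·K)) and H₂ = (r e^{−d_b τ}/(2 d_h))·(1 + √(1 − (2 d_h e^{d_b τ}/r)²·K)). Then 0 < H₁ < H₂ and each H_i (i = 1, 2) satisfies e^{−d_b τ}·r H_i²/(K + H_i²) = d_h H_i. -/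
/-- the two positive boundary equilibria `H₁ < H₂` of the mite-free
subsystem when `d_h < r e^{-d_b τ}/(2√K)`. -/
theorem boundary_equilibria (r K db dh τ : ℝ)
    (hr : 0 < r) (hK : 0 < K) (hdb : 0 < db) (hdh : 0 < dh) (hτ : 0 < τ)
    (hcond : dh < r * Real.exp (-db * τ) / (2 * Real.sqrt K))
    (H₁ H₂ : ℝ)
    (hH₁ : H₁ = r * Real.exp (-db * τ) / (2 * dh)
        * (1 - Real.sqrt (1 - (2 * dh * Real.exp (db * τ) / r) ^ 2 * K)))
    (hH₂ : H₂ = r * Real.exp (-db * τ) / (2 * dh)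
        * (1 + Real.sqrt (1 - (2 * dh * Real.exp (db * τ) / r) ^ 2 * K))) :
    0 < H₁ ∧ H₁ < H₂ ∧
      Real.exp (-db * τ) * (r * H₁ ^ 2 / (K + H₁ ^ 2)) = dh * H₁ ∧
      Real.exp (-db * τ) * (r * H₂ ^ 2 / (K + H₂ ^ 2)) = dh * H₂ := by
  set E := Real.exp (-db * τ) with hEdef
  have hEpos : 0 < E := Real.exp_pos _
  have hEmul : Real.exp (db * τ) * E = 1 := by
    rw [hEdef, ← Real.exp_add]
    norm_num
  have hEinv : Real.exp (db * τ) = E⁻¹ := by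
    field_simp at hEmul ⊢
    linarith [hEmul]
  have hsKpos : 0 < Real.sqrt K := Real.sqrt_pos.mpr hK
  have hKs : Real.sqrt K ^ 2 = K := Real.sq_sqrt hK.le
  have hlt : 2 * dh * Real.sqrt K < r * E := by
    have h := (lt_div_iff₀ (show (0:ℝ) < 2 * Real.sqrt K by positivity)).mp hcond
    nlinarith [h]
  have hlt2 : 4 * dh ^ 2 * K < r ^ 2 * E ^ 2 := by
    nlinarith [hlt, hsKpos, hKs, mul_pos hdh hsKpos]
  set D := 1 - (2 * dh * Real.exp (db * τ) / r) ^ 2 * K with hDdef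
  have hDeq : D = 1 - 4 * dh ^ 2 * K / (r ^ 2 * E ^ 2) := by
    rw [hDdef, hEinv]; field_simp; ring
  have hDpos : 0 < D := by
    rw [hDeq]
    have : 4 * dh ^ 2 * K / (r ^ 2 * E ^ 2) < 1 := by
      rw [div_lt_one (by positivity)]; exact hlt2
    linarith
  have hDlt1 : D < 1 := by
    rw [hDeq]
    have : 0 < 4 * dh ^ 2 * K / (r ^ 2 * E ^ 2) := by positivity
    linarith
  set s := Real.sqrt D with hsdef
  have hs2 : s ^ 2 = D := Real.sq_sqrt hDpos.le
  have hspos : 0 < s := Real.sqrt_pos.mpr hDpos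
  have hs1 : s < 1 := by nlinarith [hs2, hDlt1, hspos]
  have hs2' : s ^ 2 * (r ^ 2 * E ^ 2) = r ^ 2 * E ^ 2 - 4 * dh ^ 2 * K := by
    rw [hs2, hDeq]; field_simp
  have ha : 0 < r * E / (2 * dh) := by positivity
  have hH1pos : 0 < H₁ := by
    rw [hH₁]
    exact mul_pos ha (by linarith)
  have hHlt : H₁ < H₂ := by
    rw [hH₁, hH₂]
    have : (1 : ℝ) - s < 1 + s := by linarith
    exact (mul_lt_mul_iff_right₀ ha).mpr this
  have h1 : 2 * dh * H₁ = r * E * (1 - s) := by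
    rw [hH₁]; field_simp
  have h2 : 2 * dh * H₂ = r * E * (1 + s) := by
    rw [hH₂]; field_simp
  have key : ∀ H : ℝ, 4 * dh * (dh * H ^ 2 + dh * K) = 4 * dh * (r * E * H) →
      E * (r * H ^ 2 / (K + H ^ 2)) = dh * H := by
    intro H hq4
    have hq : dh * H ^ 2 + dh * K = r * E * H :=
      mul_left_cancel₀ (by positivity : (4 : ℝ) * dh ≠ 0) hq4
    have hden : K + H ^ 2 ≠ 0 := by positivity
    rw [show E * (r * H ^ 2 / (K + H ^ 2)) = E * (r * H ^ 2) / (K + H ^ 2) by ring,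
      div_eq_iff hden]
    linear_combination (-H) * hq
  refine ⟨hH1pos, hHlt, key H₁ ?_, key H₂ ?_⟩
  · linear_combination (2 * dh * H₁ + r * E * (1 - s) - 2 * r * E) * h1 + hs2'
  · linear_combination (2 * dh * H₂ + r * E * (1 + s) - 2 * r * E) * h2 + hs2'
end

section
/- Let r, K, d_b, d_h, B* be positive reals with (r − B* d_b)² ≤ 3 K d_h², and define Q(H) = −d_h H³ + (r − B* d_b) H² − d_h K H − d_b K B*. Then Q(H) < 0 for all H ≥ 0. -/
/-- if `(r - B* d_b)² ≤ 3 K d_h²` then `Q(H) < 0` for all `H ≥ 0`. -/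
theorem cubic_neg_of_small_discriminant (r K db dh Bs : ℝ)
    (hr : 0 < r) (hK : 0 < K) (hdb : 0 < db) (hdh : 0 < dh) (hBs : 0 < Bs)
    (hdisc : (r - Bs * db) ^ 2 ≤ 3 * K * dh ^ 2)
    (Q : ℝ → ℝ)
    (hQ : ∀ H, Q H = -dh * H ^ 3 + (r - Bs * db) * H ^ 2 - dh * K * H - db * K * Bs) :
    ∀ H ≥ (0 : ℝ), Q H < 0 := by
  intro H hH
  rw [hQ]
  set a := r - Bs * db with ha
  have hpos : 0 < db * K * Bs := by positivity
  have key : a * H ^ 2 ≤ dh * (H ^ 3 + K * H) := by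
    rcases le_or_gt a 0 with h | h
    · have : a * H ^ 2 ≤ 0 := mul_nonpos_of_nonpos_of_nonneg h (by positivity)
      have : 0 ≤ dh * (H ^ 3 + K * H) := by positivity
      linarith
    · have hsq : (a * H ^ 2) ^ 2 ≤ (dh * (H ^ 3 + K * H)) ^ 2 := by
        nlinarith [mul_le_mul_of_nonneg_right hdisc (pow_nonneg hH 4),
          mul_nonneg (mul_nonneg (mul_nonneg hdh.le hdh.le) (sq_nonneg H)) (sq_nonneg (H ^ 2 - K))]
      have h1 : 0 ≤ a * H ^ 2 := by positivity
      have h2 : 0 ≤ dh * (H ^ 3 + K * H) := by positivity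
      nlinarith [hsq, h1, h2]
  nlinarith
end

section
/- Let r, K, d_b, d_h, B* be positive reals with r > B* d_b and d_h < (r − B* d_b)/√(3K), define Q(H) = −d_h H³ + (r − B* d_b) H² − d_h K H − d_b K B*, and let H₂^c = ((r − B* d_b) + √((r − B* d_b)² − 3 K d_h²))/(3 d_h). If Q(H₂^c) > 0, then Q has exactly two positive roots H₁^r < H₂^r, and moreover Q(H) > 0 for H ∈ (H₁^r, H₂^r) while Q(H) < 0 for H ∈ [0, H₁^r) ∪ (H₂^r, ∞). -/
/-- if `Q(H₂^c) > 0` then `Q` has exactly two positive roots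
`H₁^r < H₂^r`, with `Q > 0` on `(H₁^r, H₂^r)` and `Q < 0` on `[0, H₁^r) ∪ (H₂^r, ∞)`. -/
theorem cubic_two_positive_roots (r K db dh Bs : ℝ)
    (hr : 0 < r) (hK : 0 < K) (hdb : 0 < db) (hdh : 0 < dh) (hBs : 0 < Bs)
    (hpos : Bs * db < r)
    (hdh2 : dh < (r - Bs * db) / Real.sqrt (3 * K))
    (Q : ℝ → ℝ)
    (hQ : ∀ H, Q H = -dh * H ^ 3 + (r - Bs * db) * H ^ 2 - dh * K * H - db * K * Bs)
    (H₂c : ℝ)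
    (hH₂c : H₂c = ((r - Bs * db) + Real.sqrt ((r - Bs * db) ^ 2 - 3 * K * dh ^ 2)) / (3 * dh))
    (hQH₂c : 0 < Q H₂c) :
    ∃ H₁r H₂r : ℝ, 0 < H₁r ∧ H₁r < H₂r ∧ Q H₁r = 0 ∧ Q H₂r = 0 ∧
      (∀ H > (0 : ℝ), Q H = 0 → H = H₁r ∨ H = H₂r) ∧
      (∀ H ∈ Set.Ioo H₁r H₂r, 0 < Q H) ∧
      (∀ H ∈ Set.Ico (0 : ℝ) H₁r, Q H < 0) ∧
      (∀ H ∈ Set.Ioi H₂r, Q H < 0) := by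
  set a := r - Bs * db with ha_def
  have ha : 0 < a := by simp only [ha_def]; linarith
  have h3K : (0:ℝ) < 3 * K := by linarith
  have hs3K : (0:ℝ) < Real.sqrt (3*K) := Real.sqrt_pos.mpr h3K
  have hsq3K : Real.sqrt (3*K) ^ 2 = 3*K := Real.sq_sqrt h3K.le
  have h1 : dh * Real.sqrt (3*K) < a := (lt_div_iff₀ hs3K).mp hdh2
  have hdisc : 0 < a^2 - 3*K*dh^2 := by
    have h2 : (dh * Real.sqrt (3*K))^2 < a^2 :=
      pow_lt_pow_left₀ h1 (mul_nonneg hdh.le hs3K.le) two_ne_zero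
    have h3 : (dh * Real.sqrt (3*K))^2 = 3*K*dh^2 := by rw [mul_pow, hsq3K]; ring
    linarith
  set s := Real.sqrt (a^2 - 3*K*dh^2) with hs_def
  have hs2 : s^2 = a^2 - 3*K*dh^2 := Real.sq_sqrt hdisc.le
  have hs_pos : 0 < s := Real.sqrt_pos.mpr hdisc
  have hs_lt : s < a := by
    nlinarith [mul_pos h3K (pow_pos hdh 2), hs2, hs_pos, ha]
  have h3dh : (0:ℝ) < 3 * dh := by linarith
  set H₁c := (a - s)/(3*dh) with hH₁c
  have hc1 : 0 < H₁c := div_pos (by linarith) h3dh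
  have hc12 : H₁c < H₂c := by
    rw [hH₂c, hH₁c, div_lt_div_iff₀ h3dh h3dh]; nlinarith
  have e1 : 3*dh*H₁c = a - s := by rw [hH₁c]; field_simp
  have e2 : 3*dh*H₂c = a + s := by rw [hH₂c]; field_simp
  have hc2pos : 0 < H₂c := lt_trans hc1 hc12
  -- derivative
  have hderiv : ∀ x : ℝ, HasDerivAt Q (-3*dh*x^2 + 2*a*x - dh*K) x := by
    intro x
    have hQfun : Q = fun H => -dh*H^3 + a*H^2 - dh*K*H - db*K*Bs := funext hQ
    rw [hQfun]
    have h := ((((hasDerivAt_pow 3 x).const_mul (-dh)).add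
        ((hasDerivAt_pow 2 x).const_mul a)).sub
        ((hasDerivAt_id x).const_mul (dh*K))).sub_const (db*K*Bs)
    refine h.congr_deriv ?_
    · push_cast; ring
  have hderivQ : ∀ x, deriv Q x = -3*dh*x^2 + 2*a*x - dh*K := fun x => (hderiv x).deriv
  have hcont : Continuous Q := by
    have hQfun : Q = fun H => -dh*H^3 + a*H^2 - dh*K*H - db*K*Bs := funext hQ
    have : Differentiable ℝ Q := fun x => (hderiv x).differentiableAt
    exact this.continuous
  have hfact : ∀ x : ℝ, 3*dh*(-3*dh*x^2 + 2*a*x - dh*K)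
      = (3*dh*x - (a-s)) * ((a+s) - 3*dh*x) := by
    intro x; linear_combination -hs2
  -- monotonicity
  have hmono : StrictMonoOn Q (Set.Icc H₁c H₂c) := by
    apply strictMonoOn_of_deriv_pos (convex_Icc _ _) hcont.continuousOn
    intro x hx
    rw [interior_Icc] at hx
    rw [hderivQ]
    have hx1 : 0 < 3*dh*x - (a-s) := by
      have := mul_lt_mul_of_pos_left hx.1 h3dh; linarith [e1]
    have hx2 : 0 < (a+s) - 3*dh*x := by
      have := mul_lt_mul_of_pos_left hx.2 h3dh; linarith [e2]
    have hP : (3*dh) * 0 < (3*dh) * (-3*dh*x^2 + 2*a*x - dh*K) := by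
      rw [mul_zero, hfact x]; exact mul_pos hx1 hx2
    exact lt_of_mul_lt_mul_left hP h3dh.le
  have hanti1 : StrictAntiOn Q (Set.Icc 0 H₁c) := by
    apply strictAntiOn_of_deriv_neg (convex_Icc _ _) hcont.continuousOn
    intro x hx
    rw [interior_Icc] at hx
    rw [hderivQ]
    have hx1 : 0 < (a-s) - 3*dh*x := by
      have := mul_lt_mul_of_pos_left hx.2 h3dh; linarith [e1]
    have hx2 : 0 < (a+s) - 3*dh*x := by
      have := mul_lt_mul_of_pos_left (lt_trans hx.2 hc12) h3dh; linarith [e2]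
    have hP : (3*dh) * (-3*dh*x^2 + 2*a*x - dh*K) < (3*dh) * 0 := by
      rw [mul_zero, hfact x]
      nlinarith [mul_pos hx1 hx2]
    exact lt_of_mul_lt_mul_left hP h3dh.le
  have hanti2 : StrictAntiOn Q (Set.Ici H₂c) := by
    apply strictAntiOn_of_deriv_neg (convex_Ici _) hcont.continuousOn
    intro x hx
    rw [interior_Ici] at hx
    rw [hderivQ]
    have hx1 : 0 < 3*dh*x - (a-s) := by
      have := mul_lt_mul_of_pos_left (lt_trans hc12 hx) h3dh; linarith [e1]
    have hx2 : 0 < 3*dh*x - (a+s) := by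
      have := mul_lt_mul_of_pos_left hx h3dh; linarith [e2]
    have hP : (3*dh) * (-3*dh*x^2 + 2*a*x - dh*K) < (3*dh) * 0 := by
      rw [mul_zero, hfact x]
      nlinarith [mul_pos hx1 hx2]
    exact lt_of_mul_lt_mul_left hP h3dh.le
  have hQ0 : Q 0 = -(db*K*Bs) := by rw [hQ]; ring
  have hQ0neg : Q 0 < 0 := by rw [hQ0]; exact neg_lt_zero.mpr (by positivity)
  have hQH₁c : Q H₁c < 0 := by
    have := hanti1 (Set.left_mem_Icc.mpr hc1.le) (Set.right_mem_Icc.mpr hc1.le) hc1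
    linarith
  -- first root
  obtain ⟨H₁r, hmem1, hroot1⟩ :=
    intermediate_value_Ioo hc12.le hcont.continuousOn ⟨hQH₁c, hQH₂c⟩
  -- large point
  set M := max (H₂c + 1) (a/dh + 1) with hM_def
  have hM1 : H₂c < M := lt_of_lt_of_le (by linarith) (le_max_left _ _)
  have hMpos : 0 < M := lt_trans hc2pos hM1
  have hM2 : a < dh * M := by
    have : a/dh < M := lt_of_lt_of_le (by linarith [div_nonneg ha.le hdh.le, (lt_add_one (a/dh))]) (le_max_right _ _)
    calc a = dh * (a/dh) := by field_simp
    _ < dh * M := by exact mul_lt_mul_of_pos_left this hdh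
  have hQM : Q M < 0 := by
    rw [hQ]
    have h1 : a * M^2 < dh * M * M^2 :=
      mul_lt_mul_of_pos_right hM2 (by positivity)
    have h2 : 0 < dh * K * M := by positivity
    have h3 : 0 < db * K * Bs := by positivity
    linarith [h1, h2, h3]
  obtain ⟨H₂r, hmem2, hroot2⟩ :=
    intermediate_value_Ioo' hM1.le hcont.continuousOn ⟨hQM, hQH₂c⟩
  have hr1Icc : H₁r ∈ Set.Icc H₁c H₂c := ⟨hmem1.1.le, hmem1.2.le⟩
  have hr2Ici : H₂r ∈ Set.Ici H₂c := hmem2.1.le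
  refine ⟨H₁r, H₂r, lt_trans hc1 hmem1.1, lt_trans hmem1.2 hmem2.1, hroot1, hroot2, ?_, ?_, ?_, ?_⟩
  · -- uniqueness
    intro H hH hQH
    rcases le_or_gt H H₁c with hle | hlt
    · exfalso
      have := hanti1 (Set.left_mem_Icc.mpr hc1.le) ⟨hH.le, hle⟩ hH
      linarith
    rcases le_or_gt H H₂c with hle2 | hlt2
    · left
      exact hmono.injOn ⟨hlt.le, hle2⟩ hr1Icc (by rw [hQH, hroot1])
    · right
      exact hanti2.injOn (Set.mem_Ici.mpr hlt2.le) hr2Ici (by rw [hQH, hroot2])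
  · -- positive between
    rintro H ⟨h1, h2⟩
    rcases le_or_gt H H₂c with hle | hlt
    · have := hmono hr1Icc ⟨lt_trans hmem1.1 h1 |>.le, hle⟩ h1
      linarith [hroot1 ▸ this]
    · have := hanti2 (Set.mem_Ici.mpr hlt.le) (Set.mem_Ici.mpr hmem2.1.le) h2
      linarith [hroot2 ▸ this]
  · -- negative on [0, H₁r)
    rintro H ⟨h0, h1⟩
    rcases le_or_gt H H₁c with hle | hlt
    · rcases eq_or_lt_of_le h0 with heq | hlt0
      · rw [← heq]; exact hQ0neg
      · have := hanti1 (Set.left_mem_Icc.mpr hc1.le) ⟨h0, hle⟩ hlt0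
        linarith
    · have := hmono ⟨hlt.le, (lt_trans h1 hmem1.2).le⟩ hr1Icc h1
      linarith [hroot1 ▸ this]
  · -- negative above H₂r
    intro H hH
    have hHgt : H₂r < H := hH
    have := hanti2 hr2Ici (Set.mem_Ici.mpr (lt_trans hmem2.1 hHgt).le) hHgt
    linarith [hroot2 ▸ this]
end

section
/- Let r, K, d_b, d_h, B* be positive reals with r > B* d_b, and define Q(H) = −d_h H³ + (r − B* d_b) H² − d_h K H − d_b K B*. If d_h < (r − B* d_b)·√(2(r − B* d_b)) / (3·√(K(r − B* d_b) + 3 d_b K B*)), then (r − B* d_b)² > 3 K d_h² (so that H₂^c = ((r − B* d_b) + √((r − B* d_b)² − 3 K d_h²))/(3 d_h) is well defined), the value at the inflection point satisfies Q((r − B* d_b)/(3 d_h)) = 2(r − B* d_b)³/(27 d_h²) − K(r − B* d_b)/3 − d_b K B* > 0, and consequently Q(H₂^c) > 0. -/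
/-- a sufficient condition on `d_h` guaranteeing `Q(H₂^c) > 0`. -/
theorem cubic_local_max_positive (r K db dh Bs : ℝ)
    (hr : 0 < r) (hK : 0 < K) (hdb : 0 < db) (hdh : 0 < dh) (hBs : 0 < Bs)
    (hpos : Bs * db < r)
    (Q : ℝ → ℝ)
    (hQ : ∀ H, Q H = -dh * H ^ 3 + (r - Bs * db) * H ^ 2 - dh * K * H - db * K * Bs)
    (hdh2 : dh < (r - Bs * db) * Real.sqrt (2 * (r - Bs * db))
        / (3 * Real.sqrt (K * (r - Bs * db) + 3 * db * K * Bs))) :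
    3 * K * dh ^ 2 < (r - Bs * db) ^ 2 ∧
    Q ((r - Bs * db) / (3 * dh))
        = 2 * (r - Bs * db) ^ 3 / (27 * dh ^ 2) - K * (r - Bs * db) / 3 - db * K * Bs ∧
    0 < Q ((r - Bs * db) / (3 * dh)) ∧
    0 < Q (((r - Bs * db) + Real.sqrt ((r - Bs * db) ^ 2 - 3 * K * dh ^ 2)) / (3 * dh)) := by
  set a := r - Bs * db with ha
  have ha0 : 0 < a := by simp only [ha]; linarith
  set c := K * a + 3 * db * K * Bs with hc
  have hc0 : 0 < c := by positivity
  have hs2a : Real.sqrt (2 * a) ^ 2 = 2 * a := Real.sq_sqrt (by linarith)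
  have hscq : Real.sqrt c ^ 2 = c := Real.sq_sqrt hc0.le
  have hsc0 : 0 < Real.sqrt c := Real.sqrt_pos.2 hc0
  have hmul : dh * (3 * Real.sqrt c) < a * Real.sqrt (2 * a) := by
    rw [lt_div_iff₀ (by positivity)] at hdh2
    linarith
  have hkey : 9 * dh ^ 2 * c < 2 * a ^ 3 := by
    have h1 : (dh * (3 * Real.sqrt c)) ^ 2 < (a * Real.sqrt (2 * a)) ^ 2 := by
      apply sq_lt_sq' _ hmul
      nlinarith [hsc0, Real.sqrt_nonneg (2 * a)]
    have e1 : (dh * (3 * Real.sqrt c)) ^ 2 = 9 * dh ^ 2 * c := by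
      linear_combination (9 * dh ^ 2) * hscq
    have e2 : (a * Real.sqrt (2 * a)) ^ 2 = 2 * a ^ 3 := by
      linear_combination (a ^ 2) * hs2a
    linarith
  have h1 : 3 * K * dh ^ 2 < a ^ 2 := by
    nlinarith [hkey, mul_pos ha0 ha0,
      mul_pos (mul_pos hdh hdh) (mul_pos hK ha0),
      mul_pos (mul_pos hdh hdh) (mul_pos (mul_pos hdb hK) hBs)]
  have h27 : (0:ℝ) < 27 * dh ^ 2 := by positivity
  have hE : Q (a / (3 * dh)) = (2 * a ^ 3 - 9 * dh ^ 2 * c) / (27 * dh ^ 2) := by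
    rw [hQ, hc]; field_simp; ring
  have hQmpos : 0 < Q (a / (3 * dh)) := by
    rw [hE]; apply div_pos (by linarith) h27
  set s := Real.sqrt (a ^ 2 - 3 * K * dh ^ 2) with hsdef
  have hs2 : s ^ 2 = a ^ 2 - 3 * K * dh ^ 2 := Real.sq_sqrt (by linarith)
  have hs0 : 0 ≤ s := Real.sqrt_nonneg _
  have hE2 : Q ((a + s) / (3 * dh))
      = (2 * a ^ 3 + 2 * s ^ 3 - 9 * dh ^ 2 * c) / (27 * dh ^ 2) := by
    rw [hQ, hc]; field_simp; linear_combination (-81 * s) * hs2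
  refine ⟨h1, ?_, hQmpos, ?_⟩
  · rw [hQ]; field_simp; ring
  · rw [hE2]
    apply div_pos _ h27
    nlinarith [pow_nonneg hs0 3]
end

section
/- Let r, K, d_b, d_h, d_m, α_b, α_h, c, a, τ be positive reals with c α_b/d_m > 1, and set B* = a/((c α_b/d_m) − 1). Define Q(H) = −d_h H³ + (r − B* d_b) H² − d_h K H − d_b K B*, f₁(H) = r H²/(K + H²), M̃(H) = ( f₁(H) − d_b B* − d_h H ) / ( α_h H/(a + H) + α_b B*/(a + B*) ), and f₂(H) = B*·( α_b M̃(H)/(a + B*) + d_b ) / ( 1 − exp(−( α_b M̃(H)/(a + B*) + d_b ) τ) ). Assume d_h < (r − B* d_b)/√(3K) and Q(H₂^c) > 0, where H₂^c = ((r − B* d_b) + √((r − B* d_b)² − 3 K d_h²))/(3 d_h); let H₁^r < H₂^r be the two positive roots of Q, and set β₁ = (1/d_b)·ln( f₁(H₂^r)/( f₁(H₂^r) − B* d_b) ) and β₂ = (1/d_b)·ln( f₁(H₁^r)/( f₁(H₁^r) − B* d_b) ). If β₁ < τ < β₂, then there exists H* ∈ (H₁^r, H₂^r) with f₁(H*)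 = f₂(H*); moreover M* := M̃(H*) > 0 and the triple (B*, H*, M*) is an equilibrium of the brood–bee–mite system. -/
lemma aux_exp_lt_one {y : ℝ} (hy : y < 0) : Real.exp y < 1 := by
  calc Real.exp y < Real.exp 0 := Real.exp_lt_exp.mpr hy
    _ = 1 := Real.exp_zero

/-- A triple of nonnegative reals `(B, H, M)` is an equilibrium of the
brood–bee–mite system with parameters `r, K, d_b, d_h, d_m, α_b, α_h, c, a, τ`. -/
def IsEquilibrium (r K db dh dm αb αh c a τ B H M : ℝ) : Prop :=
  0 ≤ B ∧ 0 ≤ H ∧ 0 ≤ M ∧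
  (r * H ^ 2 / (K + H ^ 2) - αb * B * M / (a + B) - db * B
      - r * H ^ 2 / (K + H ^ 2) * Real.exp (-(db + αb * M / (a + B)) * τ) = 0) ∧
  (r * H ^ 2 / (K + H ^ 2) * Real.exp (-(db + αb * M / (a + B)) * τ)
      - αh * H * M / (a + H) - dh * H = 0) ∧
  (c * αb * B * M / (a + B) - dm * M = 0)

/-- existence of an interior equilibrium of the brood–bee–mite
system when `τ ∈ (β₁, β₂)`. -/
theorem interior_equilibrium_exists (r K db dh dm αb αh c a τ : ℝ)
    (hr : 0 < r) (hK : 0 < K) (hdb : 0 < db) (hdh : 0 < dh) (hdm : 0 < dm)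
    (hαb : 0 < αb) (hαh : 0 < αh) (hc : 0 < c) (ha : 0 < a) (hτ : 0 < τ)
    (hratio : 1 < c * αb / dm)
    (Bs : ℝ) (hBs : Bs = a / (c * αb / dm - 1))
    (Q f₁ Mt f₂ : ℝ → ℝ)
    (hQ : ∀ H, Q H = -dh * H ^ 3 + (r - Bs * db) * H ^ 2 - dh * K * H - db * K * Bs)
    (hf₁ : ∀ H, f₁ H = r * H ^ 2 / (K + H ^ 2))
    (hMt : ∀ H, Mt H = (f₁ H - db * Bs - dh * H)
        / (αh * H / (a + H) + αb * Bs / (a + Bs)))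
    (hf₂ : ∀ H, f₂ H = Bs * (αb * Mt H / (a + Bs) + db)
        / (1 - Real.exp (-(αb * Mt H / (a + Bs) + db) * τ)))
    (hdh2 : dh < (r - Bs * db) / Real.sqrt (3 * K))
    (H₂c : ℝ)
    (hH₂c : H₂c = ((r - Bs * db) + Real.sqrt ((r - Bs * db) ^ 2 - 3 * K * dh ^ 2)) / (3 * dh))
    (hQH₂c : 0 < Q H₂c)
    (H₁r H₂r : ℝ) (hH₁r : 0 < H₁r) (hlt : H₁r < H₂r)
    (hroot1 : Q H₁r = 0) (hroot2 : Q H₂r = 0)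
    (β₁ β₂ : ℝ)
    (hβ₁ : β₁ = 1 / db * Real.log (f₁ H₂r / (f₁ H₂r - Bs * db)))
    (hβ₂ : β₂ = 1 / db * Real.log (f₁ H₁r / (f₁ H₁r - Bs * db)))
    (hτ₁ : β₁ < τ) (hτ₂ : τ < β₂) :
    ∃ Hs ∈ Set.Ioo H₁r H₂r, f₁ Hs = f₂ Hs ∧ 0 < Mt Hs ∧
      IsEquilibrium r K db dh dm αb αh c a τ Bs Hs (Mt Hs) := by
  have hH₂pos : 0 < H₂r := hH₁r.trans hlt
  have hρ : 0 < c * αb / dm - 1 := by linarith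
  have hBspos : 0 < Bs := by rw [hBs]; positivity
  have haB : 0 < a + Bs := by linarith
  have hcd : dm < c * αb := (one_lt_div hdm).mp hratio
  have hkey : c * αb * Bs = dm * (a + Bs) := by
    rw [hBs]
    rw [show c * αb / dm - 1 = (c * αb - dm) / dm from by field_simp]
    field_simp [sub_ne_zero.mpr (ne_of_gt hcd)]
    ring
  -- factorization of the cubic Q
  set H₃ : ℝ := (r - Bs * db) / dh - H₁r - H₂r with hH₃def
  set A : ℝ := dh * (H₁r * H₂r + H₁r * H₃ + H₂r * H₃) - dh * K with hAdef
  set C : ℝ := -(db * K * Bs) - dh * (H₁r * H₂r * H₃) with hCdef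
  have hexp : ∀ H, Q H = -dh * (H - H₁r) * (H - H₂r) * (H - H₃) + A * H + C := by
    intro H
    rw [hQ, hAdef, hCdef, hH₃def]
    field_simp
    ring
  have e1 : A * H₁r + C = 0 := by
    have h := hroot1; rw [hexp H₁r] at h; linear_combination h
  have e2 : A * H₂r + C = 0 := by
    have h := hroot2; rw [hexp H₂r] at h; linear_combination h
  have hA0 : A = 0 := by
    have h : A * (H₁r - H₂r) = 0 := by linear_combination e1 - e2
    rcases mul_eq_zero.mp h with h' | h'
    · exact h'
    · exact absurd (sub_eq_zero.mp h') hlt.ne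
  have hC0 : C = 0 := by linear_combination e1 - H₁r * hA0
  have hfact : ∀ H, Q H = -dh * (H - H₁r) * (H - H₂r) * (H - H₃) := by
    intro H; rw [hexp H, hA0, hC0]; ring
  have hH₃neg : H₃ < 0 := by
    by_contra h
    push_neg at h
    have h1 : 0 ≤ dh * (H₁r * H₂r * H₃) :=
      mul_nonneg hdh.le (mul_nonneg (mul_nonneg hH₁r.le hH₂pos.le) h)
    have h2 : -(db * K * Bs) - dh * (H₁r * H₂r * H₃) = 0 := by rw [← hCdef]; exact hC0
    have h3 : 0 < db * K * Bs := by positivity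
    linarith
  have hQpos : ∀ H, H₁r < H → H < H₂r → 0 < Q H := by
    intro H h1 h2
    rw [hfact]
    have h4 : 0 < dh * (H - H₁r) * (H₂r - H) * (H - H₃) :=
      mul_pos (mul_pos (mul_pos hdh (by linarith)) (by linarith)) (by linarith)
    linarith only [h4]
  have hQnn : ∀ x ∈ Set.Icc H₁r H₂r, 0 ≤ Q x := by
    intro x hx
    rw [hfact]
    have h4 : 0 ≤ dh * (x - H₁r) * (H₂r - x) * (x - H₃) :=
      mul_nonneg (mul_nonneg (mul_nonneg hdh.le (by linarith [hx.1]))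
        (by linarith [hx.2])) (by linarith [hx.1])
    linarith only [h4]
  -- numerator of Mt
  have hnumer : ∀ H, f₁ H - db * Bs - dh * H = Q H / (K + H ^ 2) := by
    intro H
    have hK2 : (0:ℝ) < K + H ^ 2 := by positivity
    rw [hf₁, hQ]
    field_simp
    ring
  have hMtQ : ∀ H, Mt H = Q H / (K + H ^ 2) / (αh * H / (a + H) + αb * Bs / (a + Bs)) := by
    intro H; rw [hMt H, hnumer H]
  have hDpos : ∀ x, H₁r ≤ x → 0 < αh * x / (a + x) + αb * Bs / (a + Bs) := by
    intro x hx
    have hx0 : 0 < x := lt_of_lt_of_le hH₁r hx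
    have hax : 0 < a + x := by linarith
    exact add_pos (div_pos (mul_pos hαh hx0) hax) (div_pos (mul_pos hαb hBspos) haB)
  have hMtnn : ∀ x ∈ Set.Icc H₁r H₂r, 0 ≤ Mt x := by
    intro x hx
    rw [hMtQ]
    have hK2 : (0:ℝ) < K + x ^ 2 := by positivity
    exact div_nonneg (div_nonneg (hQnn x hx) hK2.le) (hDpos x hx.1).le
  have hEpos : ∀ x ∈ Set.Icc H₁r H₂r, 0 < αb * Mt x / (a + Bs) + db := by
    intro x hx
    have h1 : 0 ≤ αb * Mt x / (a + Bs) := div_nonneg (mul_nonneg hαb.le (hMtnn x hx)) haB.le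
    linarith
  have hden : ∀ x ∈ Set.Icc H₁r H₂r,
      0 < 1 - Real.exp (-(αb * Mt x / (a + Bs) + db) * τ) := by
    intro x hx
    have hE := hEpos x hx
    have h1 : (-(αb * Mt x / (a + Bs) + db) * τ) < 0 :=
      mul_neg_of_neg_of_pos (neg_lt_zero.mpr hE) hτ
    have := aux_exp_lt_one h1
    linarith
  -- endpoint values
  have hmem1 : H₁r ∈ Set.Icc H₁r H₂r := ⟨le_refl _, hlt.le⟩
  have hmem2 : H₂r ∈ Set.Icc H₁r H₂r := ⟨hlt.le, le_refl _⟩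
  have hMt1 : Mt H₁r = 0 := by rw [hMtQ, hroot1]; simp
  have hMt2 : Mt H₂r = 0 := by rw [hMtQ, hroot2]; simp
  have hf₂1 : f₂ H₁r = Bs * db / (1 - Real.exp (-db * τ)) := by
    rw [hf₂, hMt1]; norm_num
  have hf₂2 : f₂ H₂r = Bs * db / (1 - Real.exp (-db * τ)) := by
    rw [hf₂, hMt2]; norm_num
  have hden0 : 0 < 1 - Real.exp (-db * τ) := by
    have h1 : (-db * τ : ℝ) < 0 := mul_neg_of_neg_of_pos (neg_lt_zero.mpr hdb) hτ
    have := aux_exp_lt_one h1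
    linarith
  have hq0 : (0:ℝ) < Real.exp (db * τ) := Real.exp_pos _
  have hf11pos : 0 < f₁ H₁r := by
    rw [hf₁]; exact div_pos (mul_pos hr (pow_pos hH₁r 2)) (by positivity)
  have hf12pos : 0 < f₁ H₂r := by
    rw [hf₁]; exact div_pos (mul_pos hr (pow_pos hH₂pos 2)) (by positivity)
  have hd1 : f₁ H₁r - db * Bs - dh * H₁r = 0 := by rw [hnumer, hroot1]; simp
  have hd2 : f₁ H₂r - db * Bs - dh * H₂r = 0 := by rw [hnumer, hroot2]; simp
  have hF1pos : 0 < f₁ H₁r - Bs * db := by linarith only [hd1, mul_pos hdh hH₁r]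
  have hF2pos : 0 < f₁ H₂r - Bs * db := by linarith only [hd2, mul_pos hdh hH₂pos]
  -- endpoint inequality at H₁r : f₁ H₁r < f₂ H₁r   (from τ < β₂)
  have hX1 : 0 < f₁ H₁r / (f₁ H₁r - Bs * db) := div_pos hf11pos hF1pos
  have hlog1 : db * τ < Real.log (f₁ H₁r / (f₁ H₁r - Bs * db)) := by
    rw [hβ₂] at hτ₂
    have h := mul_lt_mul_of_pos_left hτ₂ hdb
    have e : db * (1 / db * Real.log (f₁ H₁r / (f₁ H₁r - Bs * db)))
        = Real.log (f₁ H₁r / (f₁ H₁r - Bs * db)) := by field_simp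
    rwa [e] at h
  have hexp1 : Real.exp (db * τ) < f₁ H₁r / (f₁ H₁r - Bs * db) := by
    have h := Real.exp_lt_exp.mpr hlog1
    rwa [Real.exp_log hX1] at h
  have key1' : Real.exp (db * τ) * (f₁ H₁r - Bs * db) < f₁ H₁r :=
    (lt_div_iff₀ hF1pos).mp hexp1
  have hlt1 : f₁ H₁r < f₂ H₁r := by
    rw [hf₂1, lt_div_iff₀ hden0, show (-db * τ : ℝ) = -(db * τ) from by ring, Real.exp_neg]
    have h6 : f₁ H₁r - Bs * db < f₁ H₁r * (Real.exp (db * τ))⁻¹ := by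
      rw [← div_eq_mul_inv, lt_div_iff₀ hq0]
      linarith only [key1']
    linarith only [h6]
  -- endpoint inequality at H₂r : f₂ H₂r < f₁ H₂r   (from β₁ < τ)
  have hX2 : 0 < f₁ H₂r / (f₁ H₂r - Bs * db) := div_pos hf12pos hF2pos
  have hlog2 : Real.log (f₁ H₂r / (f₁ H₂r - Bs * db)) < db * τ := by
    rw [hβ₁] at hτ₁
    have h := mul_lt_mul_of_pos_left hτ₁ hdb
    have e : db * (1 / db * Real.log (f₁ H₂r / (f₁ H₂r - Bs * db)))
        = Real.log (f₁ H₂r / (f₁ H₂r - Bs * db)) := by field_simp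
    rwa [e] at h
  have hexp2 : f₁ H₂r / (f₁ H₂r - Bs * db) < Real.exp (db * τ) := by
    have h := Real.exp_lt_exp.mpr hlog2
    rwa [Real.exp_log hX2] at h
  have key2' : f₁ H₂r < Real.exp (db * τ) * (f₁ H₂r - Bs * db) :=
    (div_lt_iff₀ hF2pos).mp hexp2
  have hlt2 : f₂ H₂r < f₁ H₂r := by
    rw [hf₂2, div_lt_iff₀ hden0, show (-db * τ : ℝ) = -(db * τ) from by ring, Real.exp_neg]
    have h6 : f₁ H₂r * (Real.exp (db * τ))⁻¹ < f₁ H₂r - Bs * db := by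
      rw [← div_eq_mul_inv, div_lt_iff₀ hq0]
      linarith only [key2']
    linarith only [h6]
  -- continuity
  have cf₁ : ContinuousOn f₁ (Set.Icc H₁r H₂r) := by
    have hfun : f₁ = fun H => r * H ^ 2 / (K + H ^ 2) := funext hf₁
    rw [hfun]
    exact ContinuousOn.div (by fun_prop) (by fun_prop) (fun x _ => by positivity)
  have cMt : ContinuousOn Mt (Set.Icc H₁r H₂r) := by
    have hfun : Mt = fun H => (f₁ H - db * Bs - dh * H)
        / (αh * H / (a + H) + αb * Bs / (a + Bs)) := funext hMt
    rw [hfun]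
    apply ContinuousOn.div
    · exact (cf₁.sub continuousOn_const).sub (by fun_prop)
    · apply ContinuousOn.add
      · refine ContinuousOn.div (by fun_prop) (by fun_prop) (fun x hx => ?_)
        have hax : 0 < a + x := by have := hx.1; linarith
        exact hax.ne'
      · exact continuousOn_const
    · exact fun x hx => (hDpos x hx.1).ne'
  have cE : ContinuousOn (fun H => αb * Mt H / (a + Bs) + db) (Set.Icc H₁r H₂r) :=
    ((continuousOn_const.mul cMt).div_const _).add continuousOn_const
  have cf₂ : ContinuousOn f₂ (Set.Icc H₁r H₂r) := by
    have hfun : f₂ = fun H => Bs * (αb * Mt H / (a + Bs) + db)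
        / (1 - Real.exp (-(αb * Mt H / (a + Bs) + db) * τ)) := funext hf₂
    rw [hfun]
    apply ContinuousOn.div
    · exact continuousOn_const.mul cE
    · exact continuousOn_const.sub (ContinuousOn.rexp (f := fun x => -(αb * Mt x / (a + Bs) + db) * τ) (cE.neg.mul continuousOn_const))
    · exact fun x hx => (hden x hx).ne'
  have hgc : ContinuousOn (fun H => f₁ H - f₂ H) (Set.Icc H₁r H₂r) := cf₁.sub cf₂
  have h0mem : (0:ℝ) ∈ Set.Ioo (f₁ H₁r - f₂ H₁r) (f₁ H₂r - f₂ H₂r) :=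
    ⟨by linarith, by linarith⟩
  obtain ⟨Hs, hHsmem, hHs0⟩ := intermediate_value_Ioo hlt.le hgc h0mem
  have hfe : f₁ Hs = f₂ Hs := sub_eq_zero.mp hHs0
  have hMtpos : 0 < Mt Hs := by
    rw [hMtQ]
    exact div_pos (div_pos (hQpos Hs hHsmem.1 hHsmem.2) (by positivity))
      (hDpos Hs hHsmem.1.le)
  refine ⟨Hs, hHsmem, hfe, hMtpos, ?_⟩
  have hHsIcc : Hs ∈ Set.Icc H₁r H₂r := ⟨hHsmem.1.le, hHsmem.2.le⟩
  have hdenHs := hden Hs hHsIcc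
  have hHspos : 0 < Hs := hH₁r.trans hHsmem.1
  have haHs : 0 < a + Hs := by linarith
  have hfe2 := hfe
  rw [hf₂ Hs, eq_div_iff hdenHs.ne'] at hfe2
  have key2 : Mt Hs * (αh * Hs / (a + Hs) + αb * Bs / (a + Bs))
      = f₁ Hs - db * Bs - dh * Hs := by
    have h := hMt Hs
    rw [eq_div_iff (hDpos Hs hHsmem.1.le).ne'] at h
    exact h
  refine ⟨hBspos.le, hHspos.le, hMtpos.le, ?_, ?_, ?_⟩
  · rw [show r * Hs ^ 2 / (K + Hs ^ 2) = f₁ Hs from (hf₁ Hs).symm,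
        show -(db + αb * Mt Hs / (a + Bs)) * τ = -(αb * Mt Hs / (a + Bs) + db) * τ from by ring]
    linear_combination hfe2
  · rw [show r * Hs ^ 2 / (K + Hs ^ 2) = f₁ Hs from (hf₁ Hs).symm,
        show -(db + αb * Mt Hs / (a + Bs)) * τ = -(αb * Mt Hs / (a + Bs) + db) * τ from by ring]
    linear_combination (-1 : ℝ) * hfe2 - key2
  · have h3 : c * αb * Bs * Mt Hs / (a + Bs) = dm * Mt Hs := by
      rw [div_eq_iff haB.ne']
      linear_combination Mt Hs * hkey
    linarith only [h3]
end

section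
/- Let B, H, M be a solution of the brood–bee–mite delay system with initial data satisfying B₀(t) > 0 for all t ∈ [−τ, 0], H(0) > 0 and M(0) > 0. If d_h > r·e^{−d_b τ}/(2√K) and d_m > c α_b, then B(t) → 0, H(t) → 0 and M(t) → 0 as t → ∞; that is, the extinction equilibrium (0, 0, 0) is globally attracting. -/
open Real Filter Set Topology


private lemma expDecayDeriv (D μ t : ℝ) :
    HasDerivAt (fun t => D * Real.exp (-μ * t)) (-μ * (D * Real.exp (-μ * t))) t := by
  have h := (Real.hasDerivAt_exp (-μ * t)).comp t ((hasDerivAt_id t).const_mul (-μ))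
  exact (h.const_mul D).congr_deriv (by ring)

private lemma expDecayCont (D μ : ℝ) : Continuous fun t => D * Real.exp (-μ * t) :=
  continuous_const.mul (Real.continuous_exp.comp (continuous_const.mul continuous_id))

private lemma expDecayTendsto {μ : ℝ} (hμ : 0 < μ) (D : ℝ) :
    Tendsto (fun t => D * Real.exp (-μ * t)) atTop (𝓝 0) := by
  have h1 : Tendsto (fun t : ℝ => -μ * t) atTop atBot :=
    (tendsto_const_mul_atBot_of_neg (by linarith)).2 tendsto_id
  have h2 : Tendsto (fun t : ℝ => Real.exp (-μ * t)) atTop (𝓝 0) :=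
    Real.tendsto_exp_atBot.comp h1
  simpa using h2.const_mul D

private lemma sqrtBound {r K : ℝ} (hr : 0 < r) (hK : 0 < K) {h : ℝ} (h0 : 0 ≤ h) :
    r * h ^ 2 / (K + h ^ 2) ≤ r / (2 * Real.sqrt K) * h := by
  have hspos : 0 < Real.sqrt K := Real.sqrt_pos.2 hK
  have hs2 : Real.sqrt K ^ 2 = K := Real.sq_sqrt hK.le
  have hden : 0 < K + h ^ 2 := by positivity
  rw [div_mul_eq_mul_div, div_le_div_iff₀ hden (by positivity)]
  nlinarith [mul_nonneg hr.le h0, sq_nonneg (Real.sqrt K - h)]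

private lemma crossing (t₁ : ℝ) (ht₁ : 0 ≤ t₁) (f φ F φ' : ℝ → ℝ)
    (hfc : ContinuousOn f (Ici 0))
    (hφc : Continuous φ)
    (hφd : ∀ t, HasDerivAt φ (φ' t) t)
    (hfd : ∀ t, t₁ < t → HasDerivAt f (F t) t)
    (base : ∀ s ∈ Icc 0 t₁, f s < φ s)
    (key : ∀ t, t₁ < t → (∀ s ∈ Icc 0 t, f s ≤ φ s) → f t = φ t → F t < φ' t) :
    ∀ t, 0 ≤ t → f t < φ t := by
  by_contra hcon
  push_neg at hcon
  obtain ⟨u, hu0, huge⟩ := hcon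
  set A : Set ℝ := Ici t₁ ∩ (fun t => f t - φ t) ⁻¹' Ici 0 with hA
  have hu_t₁ : t₁ < u := by
    rcases le_or_gt u t₁ with h | h
    · exact absurd (base u ⟨hu0, h⟩) (not_lt.2 huge)
    · exact h
  have hAclosed : IsClosed A := by
    apply ContinuousOn.preimage_isClosed_of_isClosed
      ((hfc.mono (fun x hx => le_trans ht₁ hx)).sub (hφc.continuousOn))
      isClosed_Ici isClosed_Ici
  have hAne : A.Nonempty := ⟨u, hu_t₁.le, by simp [sub_nonneg]; linarith⟩
  have hAbdd : BddBelow A := ⟨t₁, fun x hx => hx.1⟩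
  set t₀ := sInf A with ht₀
  have ht₀A : t₀ ∈ A := hAclosed.csInf_mem hAne hAbdd
  have ht₀ge : φ t₀ ≤ f t₀ := by have := ht₀A.2; simp at this; linarith
  have ht₀t₁ : t₁ < t₀ := by
    rcases eq_or_lt_of_le (mem_Ici.1 ht₀A.1) with h | h
    · exact absurd (base t₀ ⟨le_trans ht₁ ht₀A.1, h.symm.le⟩) (not_lt.2 ht₀ge)
    · exact h
  have h0t₀ : 0 < t₀ := lt_of_le_of_lt ht₁ ht₀t₁
  have hbefore : ∀ s, 0 ≤ s → s < t₀ → f s < φ s := by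
    intro s hs0 hst
    rcases le_or_gt s t₁ with h | h
    · exact base s ⟨hs0, h⟩
    · by_contra hge
      exact absurd (csInf_le hAbdd ⟨h.le, by simp [sub_nonneg]; linarith⟩) (not_le.2 hst)
  have hneB : (𝓝[Ioo 0 t₀] t₀).NeBot := by
    rw [← mem_closure_iff_nhdsWithin_neBot, closure_Ioo (ne_of_lt h0t₀)]
    exact ⟨h0t₀.le, le_refl _⟩
  have hle_t₀ : f t₀ ≤ φ t₀ := by
    have hc : Tendsto f (𝓝[Ioo 0 t₀] t₀) (𝓝 (f t₀)) :=
      (hfc t₀ h0t₀.le).mono (fun x hx => hx.1.le)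
    have hc2 : Tendsto φ (𝓝[Ioo 0 t₀] t₀) (𝓝 (φ t₀)) :=
      (hφc.continuousAt).continuousWithinAt
    exact le_of_tendsto_of_tendsto hc hc2
      (eventually_mem_nhdsWithin.mono fun x hx => (hbefore x hx.1.le hx.2).le)
  have heq : f t₀ = φ t₀ := le_antisymm hle_t₀ ht₀ge
  have hkey : F t₀ < φ' t₀ := by
    apply key t₀ ht₀t₁ _ heq
    intro s hs
    rcases eq_or_lt_of_le hs.2 with h | h
    · rw [h]; exact heq.le
    · exact (hbefore s hs.1 h).le
  have hg : HasDerivAt (fun t => f t - φ t) (F t₀ - φ' t₀) t₀ := (hfd t₀ ht₀t₁).sub (hφd t₀)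
  have hs : Tendsto (slope (fun t => f t - φ t) t₀) (𝓝[≠] t₀) (𝓝 (F t₀ - φ' t₀)) :=
    hasDerivAt_iff_tendsto_slope.mp hg
  have h2 : Tendsto (slope (fun t => f t - φ t) t₀) (𝓝[Ioo 0 t₀] t₀) (𝓝 (F t₀ - φ' t₀)) :=
    hs.mono_left (nhdsWithin_mono _ (fun x hx => ne_of_lt hx.2))
  have h3 : 0 ≤ F t₀ - φ' t₀ := by
    haveI := hneB
    refine ge_of_tendsto h2 (eventually_mem_nhdsWithin.mono fun x hx => ?_)
    rw [slope_def_field]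
    have h1 : f x - φ x < 0 := sub_neg.2 (hbefore x hx.1.le hx.2)
    have h2 : x - t₀ < 0 := sub_neg.2 hx.2
    have h3 : f t₀ - φ t₀ = 0 := by rw [heq]; ring
    rw [h3]
    exact div_nonneg_of_nonpos (by linarith) h2.le
  linarith

set_option maxHeartbeats 2000000 in
/-- global attractivity of the extinction equilibrium when
`d_h > r e^{-d_b τ}/(2√K)` and `d_m > c α_b`. -/
theorem bhm_extinction_global (r K db dh dm αb αh c a τ : ℝ)
    (hr : 0 < r) (hK : 0 < K) (hdb : 0 < db) (hdh : 0 < dh) (hdm : 0 < dm)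
    (hαb : 0 < αb) (hαh : 0 < αh) (hc : 0 < c) (ha : 0 < a) (hτ : 0 < τ)
    (B₀ B H M : ℝ → ℝ)
    (hsol : BHMSolution r K db dh dm αb αh c a τ B₀ B H M)
    (hB₀pos : ∀ t ∈ Set.Icc (-τ) (0 : ℝ), 0 < B₀ t)
    (hH0 : 0 < H 0) (hM0 : 0 < M 0)
    (hpos : ∀ t > (0 : ℝ), 0 < B t ∧ 0 < H t ∧ 0 < M t)
    (hdh_big : r * Real.exp (-db * τ) / (2 * Real.sqrt K) < dh)
    (hdm_big : c * αb < dm) :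
    Filter.Tendsto B Filter.atTop (nhds 0) ∧
      Filter.Tendsto H Filter.atTop (nhds 0) ∧
      Filter.Tendsto M Filter.atTop (nhds 0) := by
  -- positivity of solution components on Ici 0 conveniences
  obtain ⟨hcB₀, hcB, hcH, hcM, hinitB, hinitH, hinitM, hBzero, hdB₁, hdH₁, hdB₂, hdH₂, hdM⟩ := hsol
  have hsqK : 0 < Real.sqrt K := Real.sqrt_pos.2 hK
  set β := r * Real.exp (-db * τ) / (2 * Real.sqrt K) with hβdef
  clear_value β
  have hβpos : 0 < β := by rw [hβdef]; positivity
  -- choose the decay rate lam for H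
  obtain ⟨lam, hlam0, hlamlt⟩ :
      ∃ l, 0 < l ∧ β * Real.exp (l * τ) + l < dh := by
    have hco : Continuous (fun l : ℝ => β * Real.exp (l * τ) + l) :=
      (continuous_const.mul (Real.continuous_exp.comp (continuous_id.mul continuous_const))).add
        continuous_id
    have h0 : (fun l : ℝ => β * Real.exp (l * τ) + l) 0 < dh := by
      simpa using hdh_big
    have hev : ∀ᶠ l in 𝓝 (0 : ℝ), β * Real.exp (l * τ) + l < dh :=
      (hco.continuousAt (x := 0)).eventually_lt_const h0
    have hev2 : ∀ᶠ l in 𝓝[>] (0:ℝ), β * Real.exp (l * τ) + l < dh :=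
      hev.filter_mono nhdsWithin_le_nhds
    obtain ⟨l, hl1, hl2⟩ := (hev2.and eventually_mem_nhdsWithin).exists
    exact ⟨l, hl2, hl1⟩
  -- bound on the survival factor
  have hE : ∀ t, τ < t → Esurv db αb a τ B M t ≤ Real.exp (-db * τ) := by
    intro t ht
    have hsub : Icc (t - τ) t ⊆ Ici (-τ) := fun s hs => by
      simp only [mem_Ici]; linarith [hs.1]
    have hposIcc : ∀ s ∈ Icc (t - τ) t, (0:ℝ) < s := fun s hs => by linarith [hs.1]
    have hBpos : ∀ s ∈ Icc (t - τ) t, 0 < a + B s := fun s hs => by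
      linarith [(hpos s (hposIcc s hs)).1]
    have hcont : ContinuousOn (fun s => db + αb * M s / (a + B s)) (Icc (t - τ) t) :=
      continuousOn_const.add ((continuousOn_const.mul (hcM.mono hsub)).div
        (continuousOn_const.add (hcB.mono hsub)) (fun s hs => (hBpos s hs).ne'))
    have hle : t - τ ≤ t := by linarith
    have hint : IntervalIntegrable (fun s => db + αb * M s / (a + B s))
        MeasureTheory.volume (t - τ) t := hcont.intervalIntegrable_of_Icc hle
    have hmono : (∫ _ in (t-τ)..t, db) ≤ ∫ s in (t-τ)..t, (db + αb * M s / (a + B s)) := by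
      refine intervalIntegral.integral_mono_on hle intervalIntegrable_const hint (fun s hs => ?_)
      have h1 : 0 < M s := (hpos s (hposIcc s hs)).2.2
      have h2 := hBpos s hs
      nlinarith [div_pos (mul_pos hαb h1) h2]
    rw [intervalIntegral.integral_const, smul_eq_mul] at hmono
    unfold Esurv
    rw [Real.exp_le_exp]
    nlinarith [hmono]
  -- ========== M : crossing argument ==========
  set μM := (dm - c * αb) / 2 with hμMdef
  clear_value μM
  have hμM0 : 0 < μM := by rw [hμMdef]; linarith
  have MH : ∀ t, 0 ≤ t → M t < (M 0 + 1) * Real.exp (-μM * t) := by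
    refine crossing 0 le_rfl M (fun t => (M 0 + 1) * Real.exp (-μM * t))
      (fun t => c * αb * B t * M t / (a + B t) - dm * M t)
      (fun t => -μM * ((M 0 + 1) * Real.exp (-μM * t)))
      (hcM.mono (fun y hy => le_trans (by linarith) (mem_Ici.1 hy)))
      (expDecayCont _ _) (fun t => expDecayDeriv _ _ t) (fun t ht => hdM t ht) ?_ ?_
    · intro s hs
      have : s = 0 := le_antisymm hs.2 hs.1
      subst this
      simp only [mul_zero, Real.exp_zero, mul_one]
      linarith
    · intro t ht _ heq
      beta_reduce at heq ⊢
      have hBt := (hpos t ht).1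
      have hMt := (hpos t ht).2.2
      have h1 : c * αb * B t * M t / (a + B t) ≤ c * αb * M t := by
        rw [div_le_iff₀ (by linarith)]
        nlinarith [mul_pos (mul_pos hc hαb) hMt]
      have hDe : 0 < (M 0 + 1) * Real.exp (-μM * t) := by positivity
      have h3 : c * αb * M t - dm * M t < -μM * ((M 0 + 1) * Real.exp (-μM * t)) := by
        rw [heq]; nlinarith [hDe]
      linarith
  -- ========== H : crossing argument ==========
  obtain ⟨x, hxmem, hxmax⟩ :=
    isCompact_Icc.exists_isMaxOn (⟨0, le_refl 0, hτ.le⟩ : (Icc (0:ℝ) τ).Nonempty)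
      (hcH.mono (fun y hy => le_trans (by linarith) hy.1))
  have hxmax' : ∀ y ∈ Icc (0:ℝ) τ, H y ≤ H x := isMaxOn_iff.mp hxmax
  have hHx : 0 < H x + 1 := by
    have := hxmax' 0 ⟨le_refl 0, hτ.le⟩
    linarith
  set C := (H x + 1) * Real.exp (lam * τ) with hCdef
  clear_value C
  have hC : 0 < C := by rw [hCdef]; positivity
  have HH : ∀ t, 0 ≤ t → H t < C * Real.exp (-lam * t) := by
    refine crossing τ hτ.le H (fun t => C * Real.exp (-lam * t))
      (fun t => Esurv db αb a τ B M t * (r * H (t - τ) ^ 2 / (K + H (t - τ) ^ 2))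
        - αh * H t * M t / (a + H t) - dh * H t)
      (fun t => -lam * (C * Real.exp (-lam * t)))
      (hcH.mono (fun y hy => le_trans (by linarith) (mem_Ici.1 hy)))
      (expDecayCont _ _) (fun t => expDecayDeriv _ _ t) (fun t ht => hdH₂ t ht) ?_ ?_
    · intro s hs
      have h1 : H s ≤ H x := hxmax' s hs
      have h2 : C * Real.exp (-lam * τ) = H x + 1 := by
        rw [hCdef, mul_assoc, ← Real.exp_add]
        simp
      have h3 : Real.exp (-lam * τ) ≤ Real.exp (-lam * s) :=
        Real.exp_le_exp.2 (by nlinarith [hs.2])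
      calc H s ≤ H x := h1
        _ < H x + 1 := by linarith
        _ = C * Real.exp (-lam * τ) := h2.symm
        _ ≤ C * Real.exp (-lam * s) := mul_le_mul_of_nonneg_left h3 hC.le
    · intro t ht hall heq
      beta_reduce at heq ⊢
      have hall' : ∀ s ∈ Icc (0:ℝ) t, H s ≤ C * Real.exp (-lam * s) := fun s hs => hall s hs
      have htτ : 0 < t - τ := by linarith
      have hHd := (hpos (t - τ) htτ).2.1
      have hHt := (hpos t (by linarith)).2.1
      have hMt := (hpos t (by linarith)).2.2
      have hEb := hE t ht
      have hq : 0 ≤ r * H (t - τ) ^ 2 / (K + H (t - τ) ^ 2) := by positivity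
      have h2 : Esurv db αb a τ B M t * (r * H (t - τ) ^ 2 / (K + H (t - τ) ^ 2)) ≤
          Real.exp (-db * τ) * (r / (2 * Real.sqrt K) * H (t - τ)) :=
        mul_le_mul hEb (sqrtBound hr hK hHd.le) hq (Real.exp_pos _).le
      have h3 : H (t - τ) ≤ C * Real.exp (-lam * (t - τ)) := hall' (t - τ) ⟨htτ.le, by linarith⟩
      have h4 : Real.exp (-lam * (t - τ)) = Real.exp (lam * τ) * Real.exp (-lam * t) := by
        rw [← Real.exp_add]; ring_nf
      have h5 : 0 ≤ αh * H t * M t / (a + H t) :=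
        le_of_lt (div_pos (mul_pos (mul_pos hαh hHt) hMt) (by linarith))
      have hCE : 0 < C * Real.exp (-lam * t) := by positivity
      have hfinal : Esurv db αb a τ B M t * (r * H (t - τ) ^ 2 / (K + H (t - τ) ^ 2)) ≤
          β * Real.exp (lam * τ) * (C * Real.exp (-lam * t)) := by
        calc Esurv db αb a τ B M t * (r * H (t - τ) ^ 2 / (K + H (t - τ) ^ 2))
            ≤ Real.exp (-db * τ) * (r / (2 * Real.sqrt K) * H (t - τ)) := h2
          _ = β * H (t - τ) := by rw [hβdef]; ring
          _ ≤ β * (C * Real.exp (-lam * (t - τ))) := mul_le_mul_of_nonneg_left h3 hβpos.le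
          _ = β * Real.exp (lam * τ) * (C * Real.exp (-lam * t)) := by rw [h4]; ring
      have hdheq : dh * H t = dh * (C * Real.exp (-lam * t)) := by rw [heq]
      have key2 : β * Real.exp (lam * τ) * (C * Real.exp (-lam * t))
          - dh * (C * Real.exp (-lam * t)) < -lam * (C * Real.exp (-lam * t)) := by
        nlinarith [hCE, hlamlt]
      linarith
  -- ========== B : crossing argument ==========
  set μB := min lam db / 2 with hμBdef
  clear_value μB
  have hminpos : 0 < min lam db := lt_min hlam0 hdb
  have hμB0 : 0 < μB := by rw [hμBdef]; linarith
  have hμBlam : μB < lam := by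
    rw [hμBdef]; have := min_le_left lam db; linarith
  have hμBdb : μB < db := by
    rw [hμBdef]; have := min_le_right lam db; linarith
  set C₁ := r / (2 * Real.sqrt K) * C with hC₁def
  clear_value C₁
  have hC₁pos : 0 < C₁ := by rw [hC₁def]; positivity
  have hB0 : 0 < B 0 := by
    rw [hinitB 0 ⟨by linarith, le_refl 0⟩]
    exact hB₀pos 0 ⟨by linarith, le_refl 0⟩
  set DB := C₁ / (db - μB) + B 0 + 1 with hDBdef
  clear_value DB
  have hDBq : 0 ≤ C₁ / (db - μB) := div_nonneg hC₁pos.le (by linarith)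
  have hDBpos : 0 < DB := by rw [hDBdef]; linarith
  have BB : ∀ t, 0 ≤ t → B t < DB * Real.exp (-μB * t) := by
    refine crossing 0 le_rfl B (fun t => DB * Real.exp (-μB * t))
      (fun t => if t ≤ τ then
          (r * H t ^ 2 / (K + H t ^ 2) - αb * B t * M t / (a + B t) - db * B t
            - Esurv db αb a τ B M t * B₀ (t - τ))
        else
          (r * H t ^ 2 / (K + H t ^ 2) - αb * B t * M t / (a + B t) - db * B t
            - Esurv db αb a τ B M t * (r * H (t - τ) ^ 2 / (K + H (t - τ) ^ 2))))
      (fun t => -μB * (DB * Real.exp (-μB * t)))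
      (hcB.mono (fun y hy => le_trans (by linarith) (mem_Ici.1 hy)))
      (expDecayCont _ _) (fun t => expDecayDeriv _ _ t) ?_ ?_ ?_
    · intro t ht
      by_cases h : t ≤ τ
      · simp only [if_pos h]; exact hdB₁ t ⟨ht, h⟩
      · simp only [if_neg h]; exact hdB₂ t (not_le.1 h)
    · intro s hs
      have : s = 0 := le_antisymm hs.2 hs.1
      subst this
      simp only [mul_zero, Real.exp_zero, mul_one]
      rw [hDBdef]
      linarith
    · intro t ht _ heq
      beta_reduce at heq ⊢
      obtain ⟨hBt, hHt, hMt⟩ := hpos t ht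
      have hHb : H t < C * Real.exp (-lam * t) := HH t ht.le
      have h1 : r * H t ^ 2 / (K + H t ^ 2) ≤ C₁ * Real.exp (-lam * t) := by
        calc r * H t ^ 2 / (K + H t ^ 2) ≤ r / (2 * Real.sqrt K) * H t := sqrtBound hr hK hHt.le
          _ ≤ r / (2 * Real.sqrt K) * (C * Real.exp (-lam * t)) :=
              mul_le_mul_of_nonneg_left hHb.le (by positivity)
          _ = C₁ * Real.exp (-lam * t) := by rw [hC₁def]; ring
      have h2 : 0 ≤ αb * B t * M t / (a + B t) :=
        le_of_lt (div_pos (mul_pos (mul_pos hαb hBt) hMt) (by linarith))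
      have hee : Real.exp (-lam * t) ≤ Real.exp (-μB * t) :=
        Real.exp_le_exp.2 (by nlinarith)
      have hkey2 : C₁ * Real.exp (-lam * t) - db * (DB * Real.exp (-μB * t))
          < -μB * (DB * Real.exp (-μB * t)) := by
        have e1 : C₁ * Real.exp (-lam * t) ≤ C₁ * Real.exp (-μB * t) :=
          mul_le_mul_of_nonneg_left hee hC₁pos.le
        have hne : db - μB ≠ 0 := ne_of_gt (by linarith)
        have e2 : (db - μB) * DB = C₁ + (db - μB) * (B 0 + 1) := by
          rw [hDBdef]
          field_simp
          ring
        nlinarith [Real.exp_pos (-μB * t),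
          mul_pos (show (0:ℝ) < (db - μB) * (B 0 + 1) by nlinarith) (Real.exp_pos (-μB * t))]
      have hdbeq : db * B t = db * (DB * Real.exp (-μB * t)) := by rw [heq]
      by_cases ht' : t ≤ τ
      · rw [if_pos ht']
        have h3 : 0 ≤ Esurv db αb a τ B M t * B₀ (t - τ) :=
          le_of_lt (mul_pos (Real.exp_pos _) (hB₀pos (t - τ) ⟨by linarith, by linarith⟩))
        linarith
      · rw [if_neg ht']
        have h3 : 0 ≤ Esurv db αb a τ B M t * (r * H (t - τ) ^ 2 / (K + H (t - τ) ^ 2)) := by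
          have := Real.exp_pos (-∫ s in (t - τ)..t, (db + αb * M s / (a + B s)))
          unfold Esurv
          positivity
        linarith
  -- ========== conclusions ==========
  refine ⟨?_, ?_, ?_⟩
  · refine tendsto_of_tendsto_of_tendsto_of_le_of_le' tendsto_const_nhds
      (expDecayTendsto hμB0 DB) ?_ ?_
    · exact (eventually_gt_atTop 0).mono fun t ht => ((hpos t ht).1).le
    · exact (eventually_ge_atTop 0).mono fun t ht => (BB t ht).le
  · refine tendsto_of_tendsto_of_tendsto_of_le_of_le' tendsto_const_nhds
      (expDecayTendsto hlam0 C) ?_ ?_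
    · exact (eventually_gt_atTop 0).mono fun t ht => ((hpos t ht).2.1).le
    · exact (eventually_ge_atTop 0).mono fun t ht => (HH t ht).le
  · refine tendsto_of_tendsto_of_tendsto_of_le_of_le' tendsto_const_nhds
      (expDecayTendsto hμM0 (M 0 + 1)) ?_ ?_
    · exact (eventually_gt_atTop 0).mono fun t ht => ((hpos t ht).2.2).le
    · exact (eventually_ge_atTop 0).mono fun t ht => (MH t ht).le
end
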